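/- arXiv:2004.02190 — 10 statements merged into one kernel-verified Lean document; each statement's English description precedes it below -/
import Mathlib

section
/- For every prime p and every natural number n ≥ 1, the general linear group GL_n(ZMod p) contains an element of order p^n − 1 (a Singer cycle). -/
open Matrix
open scoped MatrixGroups

/-- For every prime `p` and every `n ≥ 1`, the general linear group `GL n (ZMod p)`
contains a Singer cycle, i.e. an element of order `p ^ n - 1`. -/
theorem exists_singer_cycle (p n : ℕ) (hp : p.Prime) (hn : 1 ≤ n) :
    ∃ g : GL (Fin n) (ZMod p), orderOf g = p ^ n - 1 := by
  haveI := Fact.mk hp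
  have hn0 : n ≠ 0 := by omega
  set K := GaloisField p n with hK
  haveI : Fintype K := Fintype.ofFinite K
  have hcard : Nat.card K = p ^ n := GaloisField.card p n hn0
  -- generator of the (cyclic) unit group
  obtain ⟨ζ, hζ⟩ := IsCyclic.exists_generator (α := Kˣ)
  have hζord : orderOf ζ = p ^ n - 1 := by
    rw [orderOf_eq_card_of_forall_mem_zpowers hζ, Nat.card_units, hcard]
  -- left multiplication as an injective monoid hom into endomorphism units
  have hfr : Module.finrank (ZMod p) K = n := GaloisField.finrank p hn0
  let b : Module.Basis (Fin n) (ZMod p) K :=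
    (Module.finBasis (ZMod p) K).reindex (finCongr hfr)
  let f : K →* Module.End (ZMod p) K := (Algebra.lmul (ZMod p) K).toRingHom.toMonoidHom
  have hf : Function.Injective f := by
    intro a b hab
    have := congrArg (fun g : Module.End (ZMod p) K => g 1) hab
    simpa [f] using this
  let φ : Kˣ →* (Module.End (ZMod p) K)ˣ := Units.map f
  have hφ : Function.Injective φ := Units.map_injective hf
  let e : (Module.End (ZMod p) K)ˣ ≃* GL (Fin n) (ZMod p) :=
    Units.mapEquiv (LinearMap.toMatrixAlgEquiv b).toRingEquiv.toMulEquiv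
  refine ⟨e (φ ζ), ?_⟩
  rw [← hζord]
  rw [show orderOf (e (φ ζ)) = orderOf (φ ζ) from orderOf_injective e.toMonoidHom e.injective _]
  exact orderOf_injective φ hφ ζ
end

section
/- For every prime p, every natural number n ≥ 1, and every element g of GL_n(ZMod p), the order of g is at most p^n − 1; that is, the Singer cycles are precisely the elements of maximal order in GL_n(ZMod p). -/
open Matrix
open scoped MatrixGroups

/-- For every prime `p`, every `n ≥ 1`, and every `g : GL n (ZMod p)`, the order of `g`
is at most `p ^ n - 1`; so the Singer cycles are exactly the elements of maximal order. -/
theorem orderOf_le_singer (p n : ℕ) (hp : p.Prime) (hn : 1 ≤ n)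
    (g : GL (Fin n) (ZMod p)) : orderOf g ≤ p ^ n - 1 := by
  haveI : Fact p.Prime := ⟨hp⟩
  haveI : NeZero p := ⟨hp.ne_zero⟩
  haveI : Nonempty (Fin n) := ⟨⟨0, hn⟩⟩
  classical
  set A := Matrix (Fin n) (Fin n) (ZMod p) with hA
  let F : (Fin n → ZMod p) → A := fun c => ∑ i : Fin n, c i • (g : A) ^ (i : ℕ)
  -- every natural power of g lies in the range of F
  have key : ∀ k : ℕ, (g : A) ^ k ∈ Set.range F := by
    intro k
    have hmonic : (Matrix.charpoly (g : A)).Monic := Matrix.charpoly_monic _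
    set C := Matrix.charpoly (g : A) with hC
    have hdegC : C.natDegree = n := by
      rw [hC, Matrix.charpoly_natDegree_eq_dim, Fintype.card_fin]
    have h0 : Polynomial.aeval (g : A) C = 0 := Matrix.aeval_self_charpoly _
    set r := (Polynomial.X ^ k) %ₘ C with hr
    have hrd : r.natDegree < n := by
      rcases eq_or_ne r 0 with h | h
      · rw [h, Polynomial.natDegree_zero]; exact hn
      · rw [Polynomial.natDegree_lt_iff_degree_lt h, ← hdegC,
          ← Polynomial.degree_eq_natDegree hmonic.ne_zero]
        exact Polynomial.degree_modByMonic_lt _ hmonic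
    have heq : (g : A) ^ k = Polynomial.aeval (g : A) r := by
      have h := Polynomial.modByMonic_add_div (Polynomial.X ^ k) C
      calc (g : A) ^ k
          = Polynomial.aeval (g : A) (r + C * (Polynomial.X ^ k /ₘ C)) := by
            rw [hr, h]; simp
        _ = Polynomial.aeval (g : A) r := by
            rw [map_add, _root_.map_mul, h0, zero_mul, add_zero]
    refine ⟨fun i => r.coeff i, ?_⟩
    rw [heq, Polynomial.aeval_eq_sum_range' hrd, ← Fin.sum_univ_eq_sum_range]
  set S := Set.range F with hS
  have hScard : Fintype.card S ≤ p ^ n := by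
    calc Fintype.card S ≤ Fintype.card (Fin n → ZMod p) := Fintype.card_range_le F
      _ = p ^ n := by simp [ZMod.card]
  set T : Set A := S \ {0} with hT
  have h0S : (0 : A) ∈ S := ⟨0, by simp [F]⟩
  have hTS : T ⊂ S := by
    constructor
    · exact Set.diff_subset
    · intro h
      exact (h h0S).2 rfl
  have hTcard : Fintype.card T < Fintype.card S := Set.card_lt_card hTS
  -- injection from zpowers g into T
  have hinj : ∃ j : (Subgroup.zpowers g) → T, Function.Injective j := by
    have hmem : ∀ x : Subgroup.zpowers g, ((x : GL (Fin n) (ZMod p)) : A) ∈ T := by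
      intro x
      obtain ⟨k, hk⟩ := mem_powers_iff_mem_zpowers.mpr x.2
      constructor
      · rw [← hk]
        have : ((g ^ k : GL (Fin n) (ZMod p)) : A) = (g : A) ^ k := by
          simp [Units.val_pow_eq_pow_val]
        rw [this]
        exact key k
      · intro h
        have h1 := Units.mul_inv (x : GL (Fin n) (ZMod p))
        rw [Set.mem_singleton_iff] at h
        rw [h, zero_mul] at h1
        exact zero_ne_one h1
    refine ⟨fun x => ⟨((x : GL (Fin n) (ZMod p)) : A), hmem x⟩, ?_⟩
    intro x y hxy
    have := congrArg Subtype.val hxy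
    exact Subtype.ext (Units.ext this)
  obtain ⟨j, hj⟩ := hinj
  have : orderOf g = Nat.card (Subgroup.zpowers g) := (Nat.card_zpowers g).symm
  rw [this]
  have hle : Nat.card (Subgroup.zpowers g) ≤ Nat.card T := Nat.card_le_card_of_injective j hj
  rw [Nat.card_eq_fintype_card, Nat.card_eq_fintype_card] at hle
  rw [Nat.card_eq_fintype_card]
  omega
end

section
/- Let p be a prime, n ≥ 1, and let g ∈ GL_n(ZMod p) have order p^n − 1. Then the cyclic group generated by g acts freely on the nonzero vectors: for every integer k and every nonzero vector v ∈ (ZMod p)^n, if g^k • v = v then (p^n − 1) divides k (equivalently g^k = 1). -/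
set_option synthInstance.maxHeartbeats 1000000
set_option linter.unnecessarySimpa false
set_option maxHeartbeats 1000000


open Matrix
open scoped MatrixGroups

private lemma singer_aux (p n : ℕ) (hp : p.Prime) (hn : 1 ≤ n)
    (g : GL (Fin n) (ZMod p)) (hg : orderOf g = p ^ n - 1)
    (m : ℕ) (v : Fin n → ZMod p) (hv : v ≠ 0)
    (hfix : (((g : Matrix (Fin n) (Fin n) (ZMod p))) ^ m).mulVec v = v) :
    g ^ m = 1 := by
  classical
  haveI : Fact p.Prime := ⟨hp⟩
  set M : Matrix (Fin n) (Fin n) (ZMod p) := (g : Matrix (Fin n) (Fin n) (ZMod p)) with hMdef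
  set R := Algebra.adjoin (ZMod p) ({M} : Set (Matrix (Fin n) (Fin n) (ZMod p))) with hRdef
  have hMmem : M ∈ R := Algebra.subset_adjoin rfl
  set W := Submodule.span (ZMod p) (Set.range fun i : Fin n => M ^ (i : ℕ)) with hWdef
  have hd1 : 1 ≤ p ^ n := Nat.one_le_pow _ _ hp.pos
  have hd0 : 0 < p ^ n - 1 := by
    have : 2 ≤ p := hp.two_le
    have : 2 ≤ p ^ n := le_trans this (Nat.le_self_pow (by omega) p)
    omega
  -- R is contained in the span of the first n powers of M
  have hRW : ∀ x ∈ R, x ∈ W := by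
    intro x hx
    rw [hRdef, Algebra.adjoin_singleton_eq_range_aeval] at hx
    obtain ⟨q, rfl⟩ := hx
    show (Polynomial.aeval M) q ∈ W
    have hmon := Matrix.charpoly_monic M
    have hq : (Polynomial.aeval M) q = (Polynomial.aeval M) (q %ₘ M.charpoly) := by
      rw [Polynomial.modByMonic_eq_sub_mul_div q M.charpoly]
      simp [Matrix.aeval_self_charpoly]
    rw [hq]
    have hdeg : (q %ₘ M.charpoly).natDegree < n := by
      rcases eq_or_ne (q %ₘ M.charpoly) 0 with h0 | h0
      · rw [h0, Polynomial.natDegree_zero]; exact hn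
      · rw [Polynomial.natDegree_lt_iff_degree_lt h0]
        have := Polynomial.degree_modByMonic_lt q hmon
        rwa [Matrix.charpoly_degree_eq_dim, Fintype.card_fin] at this
    rw [Polynomial.aeval_eq_sum_range' hdeg]
    apply Submodule.sum_mem
    intro i hi
    apply Submodule.smul_mem
    exact Submodule.subset_span ⟨⟨i, Finset.mem_range.mp hi⟩, rfl⟩
  haveI : Fintype W := Fintype.ofFinite W
  haveI : Fintype R := Fintype.ofFinite R
  haveI : Fintype Rˣ := Fintype.ofFinite _
  -- cardinality of W
  have hcardW : Fintype.card W ≤ p ^ n := by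
    rw [Module.card_eq_pow_finrank (K := ZMod p) (V := W)]
    have h1 : Module.finrank (ZMod p) W ≤ n := by
      have := finrank_span_le_card (R := (ZMod p)) (Set.range fun i : Fin n => M ^ (i : ℕ))
      rw [Set.toFinset_range] at this
      exact le_trans (hWdef ▸ this) (le_trans (Finset.card_image_le) (by simp))
    calc (Fintype.card (ZMod p)) ^ Module.finrank (ZMod p) W ≤ (Fintype.card (ZMod p)) ^ n := by
          apply Nat.pow_le_pow_right (Fintype.card_pos) h1
      _ = p ^ n := by rw [ZMod.card]
  have hcardR : Fintype.card R ≤ p ^ n := by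
    refine le_trans (Fintype.card_le_of_injective
      (fun x : R => (⟨x.1, hRW x.1 x.2⟩ : W)) ?_) hcardW
    intro a b hab
    have h := congrArg Subtype.val hab
    exact Subtype.ext h
  -- M to the order of g is 1
  have hMd : M ^ (p ^ n - 1) = 1 := by
    have := pow_orderOf_eq_one g
    rw [hg] at this
    calc M ^ (p ^ n - 1) = ((g ^ (p ^ n - 1) : GL (Fin n) (ZMod p)) : Matrix (Fin n) (Fin n) (ZMod p)) := by
          rw [Units.val_pow_eq_pow_val]
      _ = 1 := by rw [this]; rfl
  -- the unit of R given by M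
  have hMul : (⟨M, hMmem⟩ : R) * (⟨M, hMmem⟩ : R) ^ (p ^ n - 2) = 1 := by
    apply Subtype.ext
    push_cast
    rw [← pow_succ']
    have : p ^ n - 2 + 1 = p ^ n - 1 := by omega
    rw [this, hMd]
  have hMul' : (⟨M, hMmem⟩ : R) ^ (p ^ n - 2) * (⟨M, hMmem⟩ : R) = 1 := by
    apply Subtype.ext
    push_cast
    rw [← pow_succ]
    have : p ^ n - 2 + 1 = p ^ n - 1 := by omega
    rw [this, hMd]
  set u : Rˣ := ⟨⟨M, hMmem⟩, (⟨M, hMmem⟩ : R) ^ (p ^ n - 2), hMul, hMul'⟩ with hu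
  -- orderOf u = p ^ n - 1
  have hou : orderOf u = p ^ n - 1 := by
    have hinj : Function.Injective
        (Units.map (R.val.toRingHom.toMonoidHom) : Rˣ →* (Matrix (Fin n) (Fin n) (ZMod p))ˣ) :=
      Units.map_injective Subtype.val_injective
    have := orderOf_injective _ hinj u
    rw [← this]
    have : (Units.map (R.val.toRingHom.toMonoidHom)) u = g := by
      apply Units.ext
      rfl
    rw [this, hg]
  -- nontriviality of R
  haveI : Nontrivial R := by
    refine nontrivial_of_ne 0 1 fun h => ?_
    have h2 := congrArg (fun x : R => (x : Matrix (Fin n) (Fin n) (ZMod p)) ⟨0, hn⟩ ⟨0, hn⟩) h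
    simp [Matrix.one_apply_eq] at h2
  -- units inject into nonzero elements
  have une : ∀ w : Rˣ, (w : R) ≠ 0 := by
    intro w hw
    have : (1 : R) = 0 := by
      calc (1 : R) = (w : R) * (w⁻¹ : Rˣ) := by rw [← Units.val_mul]; simp
        _ = 0 := by rw [hw, zero_mul]
    exact one_ne_zero this
  haveI : Fintype {x : R // x ≠ 0} := Fintype.ofFinite _
  haveI : Fintype {x : R // x = 0} := Fintype.ofFinite _
  set f : Rˣ → {x : R // x ≠ 0} := fun w => ⟨(w : R), une w⟩ with hf
  have hfinj : Function.Injective f := by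
    intro a b hab
    exact Units.ext (show (a : R) = b from congrArg Subtype.val hab)
  have hcards : Fintype.card {x : R // x ≠ 0} = Fintype.card R - 1 := by
    have := Fintype.card_subtype_compl (fun x : R => x = 0)
    simpa [Fintype.card_subtype_eq] using this
  have hle1 : p ^ n - 1 ≤ Fintype.card Rˣ := by
    refine Nat.le_of_dvd Fintype.card_pos ?_
    rw [← hou]; exact orderOf_dvd_card
  have hle2 : Fintype.card Rˣ ≤ Fintype.card {x : R // x ≠ 0} :=
    Fintype.card_le_of_injective f hfinj
  have hcardeq : Fintype.card Rˣ = Fintype.card {x : R // x ≠ 0} := by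
    have : Fintype.card {x : R // x ≠ 0} ≤ p ^ n - 1 := by
      rw [hcards]; omega
    omega
  have hfsurj : Function.Surjective f :=
    ((Fintype.bijective_iff_injective_and_card f).mpr ⟨hfinj, hcardeq⟩).2
  -- now the main argument
  by_contra hgm
  have hx : ((⟨M, hMmem⟩ : R) ^ m - 1 : R) ≠ 0 := by
    intro h0
    apply hgm
    have : M ^ m = 1 := by
      have := congrArg Subtype.val (sub_eq_zero.mp h0)
      push_cast at this
      exact this
    apply Units.ext
    rw [Units.val_pow_eq_pow_val, this]; rfl
  obtain ⟨w, hw⟩ := hfsurj ⟨_, hx⟩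
  have hwv : (w : R) = (⟨M, hMmem⟩ : R) ^ m - 1 := congrArg Subtype.val hw
  set N : Matrix (Fin n) (Fin n) (ZMod p) := (((w⁻¹ : Rˣ) : R) : Matrix (Fin n) (Fin n) (ZMod p)) with hN
  have hNM : N * (M ^ m - 1) = 1 := by
    have : ((w⁻¹ : Rˣ) : R) * (w : R) = 1 := by rw [← Units.val_mul]; simp
    rw [hwv] at this
    have := congrArg Subtype.val this
    push_cast at this
    exact this
  have : v = 0 := by
    calc v = (1 : Matrix (Fin n) (Fin n) (ZMod p)).mulVec v := by rw [Matrix.one_mulVec]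
      _ = (N * (M ^ m - 1)).mulVec v := by rw [hNM]
      _ = N.mulVec ((M ^ m - 1).mulVec v) := by rw [Matrix.mulVec_mulVec]
      _ = N.mulVec (((M ^ m).mulVec v) - (1 : Matrix (Fin n) (Fin n) (ZMod p)).mulVec v) := by
          rw [Matrix.sub_mulVec]
      _ = N.mulVec 0 := by rw [hfix, Matrix.one_mulVec, sub_self]
      _ = 0 := Matrix.mulVec_zero N
  exact hv this

/-- A Singer cycle `g` in `GL n (ZMod p)` generates a cyclic group acting freely on the
nonzero vectors: if `g ^ k` fixes a nonzero vector then `p ^ n - 1 ∣ k`, i.e. `g ^ k = 1`. -/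
theorem singer_cycle_free (p n : ℕ) (hp : p.Prime) (hn : 1 ≤ n)
    (g : GL (Fin n) (ZMod p)) (hg : orderOf g = p ^ n - 1)
    (k : ℤ) (v : Fin n → ZMod p) (hv : v ≠ 0)
    (hfix : ((g ^ k : GL (Fin n) (ZMod p)) : Matrix (Fin n) (Fin n) (ZMod p)).mulVec v = v) :
    ((p ^ n - 1 : ℕ) : ℤ) ∣ k := by
  have hd0 : 0 < p ^ n - 1 := by
    have h2 : 2 ≤ p := hp.two_le
    have : 2 ≤ p ^ n := le_trans h2 (Nat.le_self_pow (by omega) p)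
    omega
  set m : ℕ := (k % ((p ^ n - 1 : ℕ) : ℤ)).toNat with hm
  have hmnn : (0 : ℤ) ≤ k % ((p ^ n - 1 : ℕ) : ℤ) :=
    Int.emod_nonneg k (by exact_mod_cast hd0.ne')
  have hmk : (m : ℤ) = k % ((p ^ n - 1 : ℕ) : ℤ) := Int.toNat_of_nonneg hmnn
  have hzp : g ^ k = g ^ m := by
    have := zpow_mod_orderOf g k
    rw [hg] at this
    rw [← this, ← hmk, zpow_natCast]
  rw [hzp] at hfix
  have hfix' : (((g : Matrix (Fin n) (Fin n) (ZMod p))) ^ m).mulVec v = v := by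
    rwa [← Units.val_pow_eq_pow_val]
  have h1 : g ^ m = 1 := singer_aux p n hp hn g hg m v hv hfix'
  have h2 : (p ^ n - 1) ∣ m := hg ▸ orderOf_dvd_of_pow_eq_one h1
  have h3 : ((p ^ n - 1 : ℕ) : ℤ) ∣ (m : ℤ) := Int.natCast_dvd_natCast.mpr h2
  rw [hmk] at h3
  obtain ⟨c, hc⟩ := h3
  refine ⟨k / ((p ^ n - 1 : ℕ) : ℤ) + c, ?_⟩
  have := Int.mul_ediv_add_emod k ((p ^ n - 1 : ℕ) : ℤ)
  rw [hc] at this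
  ring_nf
  ring_nf at this
  omega
end

section
/- Let p be a prime, n ≥ 1, and let g ∈ GL_n(ZMod p) have order p^n − 1. Then the cyclic group generated by g acts transitively on the nonzero vectors of (ZMod p)^n: for all nonzero v, w ∈ (ZMod p)^n there exists a natural number k with g^k • v = w. -/
set_option maxHeartbeats 800000


open Matrix
open scoped MatrixGroups

/-- A Singer cycle `g` in `GL n (ZMod p)` generates a cyclic group acting transitively on
the nonzero vectors of `(ZMod p) ^ n`. -/
theorem singer_cycle_transitive (p n : ℕ) (hp : p.Prime) (hn : 1 ≤ n)
    (g : GL (Fin n) (ZMod p)) (hg : orderOf g = p ^ n - 1)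
    (v w : Fin n → ZMod p) (hv : v ≠ 0) (hw : w ≠ 0) :
    ∃ k : ℕ, ((g ^ k : GL (Fin n) (ZMod p)) : Matrix (Fin n) (Fin n) (ZMod p)).mulVec v = w := by
  classical
  haveI : Fact p.Prime := ⟨hp⟩
  haveI : Nonempty (Fin n) := ⟨⟨0, hn⟩⟩
  set M : Matrix (Fin n) (Fin n) (ZMod p) := (g : Matrix (Fin n) (Fin n) (ZMod p)) with hM
  have hNpos : 1 ≤ p ^ n := Nat.one_le_pow _ _ hp.pos
  set N := p ^ n - 1 with hN
  have hN1 : N + 1 = p ^ n := Nat.succ_pred_eq_of_pos hNpos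
  set A := Algebra.adjoin (ZMod p) ({M} : Set (Matrix (Fin n) (Fin n) (ZMod p))) with hA
  have hspan : Submodule.span (ZMod p)
      ((Finset.image (M ^ ·) (Finset.range n) : Finset _) : Set _) =
      Subalgebra.toSubmodule A := by
    have := Submodule.span_range_natDegree_eq_adjoin (M.charpoly_monic) (M.aeval_self_charpoly)
    rw [Matrix.charpoly_natDegree_eq_dim, Fintype.card_fin] at this
    rw [hA]; convert this using 3
    ext x; simp
    · rfl
    · congr 1; exact Subsingleton.elim _ _
  have hfinrank : Module.finrank (ZMod p) A ≤ n := by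
    have : Module.finrank (ZMod p) (Subalgebra.toSubmodule A) ≤ n := by
      rw [← hspan]
      exact (finrank_span_finset_le_card _).trans (by
        simpa using Finset.card_image_le.trans (by simp))
    exact this
  have hcardA : Fintype.card A = p ^ Module.finrank (ZMod p) A := by
    have := Module.card_eq_pow_finrank (K := ZMod p) (V := A)
    rwa [ZMod.card] at this
  have hcard_le : Fintype.card A ≤ p ^ n := by
    rw [hcardA]; exact Nat.pow_le_pow_right hp.one_lt.le hfinrank
  -- powers of M lie in A
  have hmemA : ∀ k : ℕ, M ^ k ∈ A := fun k => A.pow_mem (Algebra.subset_adjoin rfl) k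
  -- the injective enumeration
  have hcoe : ∀ k : ℕ, ((g ^ k : GL (Fin n) (ZMod p)) : Matrix (Fin n) (Fin n) (ZMod p)) = M ^ k :=
    fun k => Units.val_pow_eq_pow_val g k
  have hMpow_ne : ∀ k : ℕ, M ^ k ≠ 0 := by
    intro k h
    have : (1 : Matrix (Fin n) (Fin n) (ZMod p)) = 0 := by
      calc (1 : Matrix (Fin n) (Fin n) (ZMod p))
          = ((g ^ k)⁻¹ : GL (Fin n) (ZMod p)) * M ^ k := by
            rw [← hcoe, ← Units.val_mul, inv_mul_cancel, Units.val_one]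
      _ = 0 := by rw [h, mul_zero]
    exact one_ne_zero this
  have hMpow_inj : ∀ j k : ℕ, j < N → k < N → M ^ j = M ^ k → j = k := by
    intro j k hj hk hjk
    have : g ^ j = g ^ k := Units.ext (by rw [hcoe, hcoe]; exact hjk)
    exact pow_injOn_Iio_orderOf (by simpa [hg] using hj) (by simpa [hg] using hk) this
  let F : Fin (N + 1) → A := fun k =>
    if h : (k : ℕ) < N then ⟨M ^ (k : ℕ), hmemA _⟩ else 0
  have hFinj : Function.Injective F := by
    intro j k h
    simp only [F] at h
    split_ifs at h with h1 h2 h2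
    · exact Fin.ext (hMpow_inj _ _ h1 h2 (by simpa using congrArg Subtype.val h))
    · exact absurd (congrArg Subtype.val h) (by simpa using hMpow_ne (j : ℕ))
    · exact absurd (congrArg Subtype.val h).symm (by simpa using hMpow_ne (k : ℕ))
    · exact Fin.ext (by omega)
  have hcard_ge : N + 1 ≤ Fintype.card A := by
    simpa using Fintype.card_le_of_injective F hFinj
  have hcardA' : Fintype.card A = p ^ n := le_antisymm hcard_le (by omega)
  have hFsurj : Function.Surjective F := by
    exact ((Fintype.bijective_iff_injective_and_card F).mpr
      ⟨hFinj, by simpa [hcardA'] using hN1⟩).2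
  have hform : ∀ a : A, a = 0 ∨ ∃ k : ℕ, (a : Matrix (Fin n) (Fin n) (ZMod p)) = M ^ k := by
    intro a
    obtain ⟨k, hk⟩ := hFsurj a
    by_cases h : (k : ℕ) < N
    · right; exact ⟨k, by rw [← hk]; simp [F, h]⟩
    · left; rw [← hk]; simp [F, h]
  let ψ : A →ₗ[ZMod p] (Fin n → ZMod p) :=
  { toFun := fun a => (a : Matrix (Fin n) (Fin n) (ZMod p)).mulVec v
    map_add' := fun a b => by
      show ((a + b : A) : Matrix (Fin n) (Fin n) (ZMod p)).mulVec v = _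
      rw [Subalgebra.coe_add, Matrix.add_mulVec]
    map_smul' := fun c a => by
      show ((c • a : A) : Matrix (Fin n) (Fin n) (ZMod p)).mulVec v = _
      rw [Subalgebra.coe_smul, Matrix.smul_mulVec]
      rfl }
  have hψinj : Function.Injective ψ := by
    rw [injective_iff_map_eq_zero]
    intro a ha
    rcases hform a with rfl | ⟨k, hk⟩
    · rfl
    · exfalso
      apply hv
      have h0 : (M ^ k).mulVec v = 0 := by
        have : (a : Matrix (Fin n) (Fin n) (ZMod p)).mulVec v = 0 := ha
        rwa [hk] at this
      calc v = (1 : Matrix (Fin n) (Fin n) (ZMod p)).mulVec v := (Matrix.one_mulVec v).symm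
      _ = ((((g ^ k)⁻¹ : GL (Fin n) (ZMod p)) : Matrix (Fin n) (Fin n) (ZMod p))
            * M ^ k).mulVec v := by
            rw [← hcoe, ← Units.val_mul, inv_mul_cancel, Units.val_one]
      _ = (((g ^ k)⁻¹ : GL (Fin n) (ZMod p)) : Matrix (Fin n) (Fin n) (ZMod p)).mulVec
            ((M ^ k).mulVec v) := by rw [← Matrix.mulVec_mulVec]
      _ = 0 := by rw [h0, Matrix.mulVec_zero]
  have hψsurj : Function.Surjective ψ := by
    have hc : Fintype.card A = Fintype.card (Fin n → ZMod p) := by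
      simp [hcardA', Fintype.card_fun, ZMod.card]
    exact ((Fintype.bijective_iff_injective_and_card ψ).mpr ⟨hψinj, hc⟩).2
  obtain ⟨a, ha⟩ := hψsurj w
  rcases hform a with rfl | ⟨k, hk⟩
  · exact absurd (by simpa [ψ, Matrix.zero_mulVec] using ha.symm) hw
  · exact ⟨k, by rw [hcoe, ← hk]; exact ha⟩
end

section
/- Let p be a prime and n ≥ 1. If g and h are elements of GL_n(ZMod p), each of order p^n − 1, then the cyclic subgroups ⟨g⟩ and ⟨h⟩ are conjugate in GL_n(ZMod p): there exists x ∈ GL_n(ZMod p) with x⁻¹⟨g⟩x = ⟨h⟩. -/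
open Matrix Polynomial
open scoped MatrixGroups

namespace SingerAux

variable (p n : ℕ) [Fact p.Prime]

/-- The subalgebra of matrices generated by a unit `u`. -/
abbrev Fld (u : (Matrix (Fin n) (Fin n) (ZMod p))ˣ) :
    Subalgebra (ZMod p) (Matrix (Fin n) (Fin n) (ZMod p)) :=
  Algebra.adjoin (ZMod p) {u.val}

/-- `u` as an element of `Fld p n u`. -/
def gen (u : (Matrix (Fin n) (Fin n) (ZMod p))ˣ) : Fld p n u :=
  ⟨u.val, Algebra.self_mem_adjoin_singleton _ _⟩

noncomputable instance (u : (Matrix (Fin n) (Fin n) (ZMod p))ˣ) : CommRing (Fld p n u) :=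
  Algebra.adjoinCommRingOfComm (ZMod p) (by
    rintro a ha b hb
    rw [Set.mem_singleton_iff] at ha hb
    subst ha; subst hb; rfl)

variable {p n}

theorem coe_gen_pow (u : (Matrix (Fin n) (Fin n) (ZMod p))ˣ) (i : ℕ) :
    ((gen p n u ^ i : Fld p n u) : Matrix (Fin n) (Fin n) (ZMod p)) = (u ^ i).val := by
  rw [Units.val_pow_eq_pow_val]
  induction i with
  | zero => rfl
  | succ k ih =>
    rw [pow_succ, pow_succ, ← ih]
    rfl

theorem orderOf_gen (u : (Matrix (Fin n) (Fin n) (ZMod p))ˣ) :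
    orderOf (gen p n u) = orderOf u := by
  have h1 : orderOf ((Fld p n u).val.toRingHom.toMonoidHom (gen p n u)) = orderOf (gen p n u) :=
    orderOf_injective _ (fun a b hab => Subtype.ext hab) _
  have h2 : (Fld p n u).val.toRingHom.toMonoidHom (gen p n u) = (u : Matrix (Fin n) (Fin n) (ZMod p)) := rfl
  rw [h2] at h1
  rw [← h1, orderOf_units]

theorem main_struct (hn : 1 ≤ n) (u : (Matrix (Fin n) (Fin n) (ZMod p))ˣ)
    (hu : orderOf u = p ^ n - 1) :
    (∀ a : Fld p n u, a = 0 ∨ ∃ i : ℕ, a = gen p n u ^ i) ∧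
      Nat.card (Fld p n u) = p ^ n := by
  have hp : p.Prime := Fact.out
  haveI : NeZero p := ⟨hp.pos.ne'⟩
  haveI : NeZero n := ⟨by omega⟩
  haveI : Nontrivial (ZMod p) := ⟨⟨0, 1, by
    intro h
    exact (hp.one_lt.ne' (by simpa using congrArg ZMod.val h.symm))⟩⟩
  haveI : Nontrivial (Matrix (Fin n) (Fin n) (ZMod p)) := by
    infer_instance
  have hN2 : 2 ≤ p ^ n := by
    calc 2 ≤ p := hp.two_le
    _ = p ^ 1 := (pow_one p).symm
    _ ≤ p ^ n := Nat.pow_le_pow_right hp.pos hn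
  -- upper bound on cardinality via the minimal polynomial
  classical
  have hint : IsIntegral (ZMod p) u.val := Matrix.isIntegral u.val
  have hmono : (minpoly (ZMod p) u.val).Monic := minpoly.monic hint
  have hdeg : (minpoly (ZMod p) u.val).natDegree ≤ n := by
    have h1 := Polynomial.natDegree_le_of_dvd (Matrix.minpoly_dvd_charpoly u.val)
      (Matrix.charpoly_monic u.val).ne_zero
    simpa [Matrix.charpoly_natDegree_eq_dim] using h1
  set φ : (Fin n → ZMod p) → Fld p n u := fun c =>
    ⟨∑ i : Fin n, c i • u.val ^ (i : ℕ), Subalgebra.sum_mem _ (fun i _ =>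
      Subalgebra.smul_mem _ (Subalgebra.pow_mem _ (Algebra.self_mem_adjoin_singleton _ _) _) _)⟩ with hφ
  have hsurj : Function.Surjective φ := by
    rintro ⟨m, hm⟩
    have hm' : m ∈ Algebra.adjoin (ZMod p) {u.val} := hm
    rw [Algebra.adjoin_singleton_eq_range_aeval] at hm'
    obtain ⟨q, hq⟩ := hm'
    set r := q %ₘ minpoly (ZMod p) u.val with hr
    have haev : Polynomial.aeval u.val r = m := by
      have hdiv := Polynomial.modByMonic_add_div q (minpoly (ZMod p) u.val)
      have h5 := congrArg (Polynomial.aeval u.val) hdiv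
      rw [map_add, _root_.map_mul, minpoly.aeval, zero_mul, add_zero] at h5
      rw [← hr] at h5
      rw [h5]
      exact hq
    have hrdeg : r.natDegree < n := by
      rcases eq_or_ne r 0 with h0 | h0
      · rw [h0, Polynomial.natDegree_zero]; omega
      · exact lt_of_lt_of_le
          (Polynomial.natDegree_lt_natDegree h0 (Polynomial.degree_modByMonic_lt q hmono)) hdeg
    refine ⟨fun i => r.coeff i, ?_⟩
    apply Subtype.ext
    show ∑ i : Fin n, r.coeff i • u.val ^ (i : ℕ) = m
    rw [Fin.sum_univ_eq_sum_range (fun i => r.coeff i • u.val ^ i) n]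
    rw [← Polynomial.aeval_eq_sum_range' hrdeg]
    exact haev
  have hle : Nat.card (Fld p n u) ≤ p ^ n := by
    have := Nat.card_le_card_of_surjective φ hsurj
    calc Nat.card (Fld p n u) ≤ Nat.card (Fin n → ZMod p) := this
    _ = p ^ n := by simp [Nat.card_eq_fintype_card, ZMod.card]
  -- the p^n element set {0} ∪ {powers of gen}
  set f : Fin (p ^ n - 1) → Fld p n u := fun i => gen p n u ^ (i : ℕ) with hf
  have hfinj : Function.Injective f := by
    intro i j hij
    have hval : (u ^ (i : ℕ)) = u ^ (j : ℕ) := by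
      apply Units.ext
      rw [← coe_gen_pow, ← coe_gen_pow]
      exact congrArg Subtype.val hij
    have := pow_injOn_Iio_orderOf (x := u)
      (by rw [hu]; exact Set.mem_Iio.2 i.isLt) (by rw [hu]; exact Set.mem_Iio.2 j.isLt) hval
    exact Fin.ext this
  have h0nr : (0 : Fld p n u) ∉ Set.range f := by
    rintro ⟨i, hi⟩
    have h2 : ((u ^ (i : ℕ)).val : Matrix (Fin n) (Fin n) (ZMod p)) = 0 := by
      rw [← coe_gen_pow]
      exact congrArg Subtype.val hi
    exact (u ^ (i : ℕ)).isUnit.ne_zero h2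
  set P : Set (Fld p n u) := insert 0 (Set.range f) with hP
  have hPcard : P.ncard = p ^ n := by
    rw [hP, Set.ncard_insert_of_notMem h0nr (Set.finite_range f)]
    rw [← Set.image_univ, Set.ncard_image_of_injective _ hfinj, Set.ncard_univ]
    simp only [Nat.card_eq_fintype_card, Fintype.card_fin]
    have hp2 : 2 ≤ p ^ n := hN2
    omega
  have hPuniv : P = Set.univ := by
    apply Set.eq_of_subset_of_ncard_le (Set.subset_univ P)
    rw [Set.ncard_univ, hPcard]
    exact hle
  constructor
  · intro a
    have ha : a ∈ P := by rw [hPuniv]; trivial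
    rcases ha with h | ⟨i, hi⟩
    · left; exact h
    · right; exact ⟨i, hi.symm⟩
  · rw [← hPcard, hPuniv, Set.ncard_univ]

theorem isField (hn : 1 ≤ n) (u : (Matrix (Fin n) (Fin n) (ZMod p))ˣ)
    (hu : orderOf u = p ^ n - 1) : IsField (Fld p n u) := by
  obtain ⟨hstruct, hcard⟩ := main_struct hn u hu
  have hp : p.Prime := Fact.out
  have hN2 : 2 ≤ p ^ n := by
    calc 2 ≤ p := hp.two_le
    _ = p ^ 1 := (pow_one p).symm
    _ ≤ p ^ n := Nat.pow_le_pow_right hp.pos hn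
  haveI : NeZero n := ⟨by omega⟩
  haveI : Nontrivial (ZMod p) := ⟨⟨0, 1, by
    intro h
    exact (hp.one_lt.ne' (by simpa using congrArg ZMod.val h.symm))⟩⟩
  have hord : orderOf (gen p n u) = p ^ n - 1 := by rw [orderOf_gen, hu]
  refine ⟨⟨0, 1, ?_⟩, mul_comm, ?_⟩
  · intro h
    have : ((0 : Fld p n u) : Matrix (Fin n) (Fin n) (ZMod p)) =
        ((1 : Fld p n u) : Matrix (Fin n) (Fin n) (ZMod p)) := congrArg Subtype.val h
    simp only [ZeroMemClass.coe_zero, OneMemClass.coe_one] at this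
    exact zero_ne_one this
  · intro a ha
    rcases hstruct a with h0 | ⟨i, rfl⟩
    · exact absurd h0 ha
    · refine ⟨gen p n u ^ (i * (p ^ n - 2)), ?_⟩
      rw [← pow_add]
      have harith : i + i * (p ^ n - 2) = (p ^ n - 1) * i := by
        have h3 : p ^ n - 1 = (p ^ n - 2) + 1 := by omega
        rw [h3]
        ring
      rw [harith, pow_mul, ← hord, pow_orderOf_eq_one, one_pow]

theorem toMatrix'_mulVecLin {n : ℕ} {R : Type*} [CommRing R]
    (A : Matrix (Fin n) (Fin n) R) : LinearMap.toMatrix' A.mulVecLin = A := by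
  have h1 : A.mulVecLin = Matrix.toLin' A := by
    apply LinearMap.ext
    intro v
    rw [Matrix.toLin'_apply, Matrix.mulVecLin_apply]
  rw [h1, LinearMap.toMatrix'_toLin']

end SingerAux

open SingerAux

/-- Any two subgroups of `GL n (ZMod p)` generated by Singer cycles are conjugate:
if `g` and `h` both have order `p ^ n - 1`, then some `x` conjugates `⟨g⟩` onto `⟨h⟩`. -/
theorem singer_cycles_conjugate (p n : ℕ) (hp : p.Prime) (hn : 1 ≤ n)
    (g h : GL (Fin n) (ZMod p))
    (hg : orderOf g = p ^ n - 1) (hh : orderOf h = p ^ n - 1) :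
    ∃ x : GL (Fin n) (ZMod p),
      (Subgroup.zpowers g).map (MulAut.conj x⁻¹).toMonoidHom = Subgroup.zpowers h := by
  classical
  haveI : Fact p.Prime := ⟨hp⟩
  haveI : NeZero p := ⟨hp.pos.ne'⟩
  haveI : NeZero n := ⟨by omega⟩
  haveI : Nontrivial (ZMod p) := ⟨⟨0, 1, by
    intro h
    exact (hp.one_lt.ne' (by simpa using congrArg ZMod.val h.symm))⟩⟩
  obtain ⟨hgstruct, hgcard⟩ := main_struct hn g hg
  obtain ⟨hhstruct, hhcard⟩ := main_struct hn h hh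
  letI : Field (Fld p n g) := (isField hn g hg).toField
  letI : Field (Fld p n h) := (isField hn h hh).toField
  let σ : Fld p n g ≃ₐ[ZMod p] Fld p n h :=
    (GaloisField.algEquivGaloisField p n hgcard).trans
      (GaloisField.algEquivGaloisField p n hhcard).symm
  -- the base vector
  set v₀ : Fin n → ZMod p := fun _ => 1 with hv₀def
  have hv₀ : v₀ ≠ 0 := by
    intro hcon
    have := congrFun hcon ⟨0, by omega⟩
    exact one_ne_zero this
  -- evaluation maps
  have mkE : ∀ (u : GL (Fin n) (ZMod p)), orderOf u = p ^ n - 1 →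
      ∃ E : Fld p n u ≃ₗ[ZMod p] (Fin n → ZMod p),
        ∀ a : Fld p n u, E a = (a : Matrix (Fin n) (Fin n) (ZMod p)) *ᵥ v₀ := by
    intro u hu
    obtain ⟨hustruct, hucard⟩ := main_struct hn u hu
    set e : Fld p n u →ₗ[ZMod p] (Fin n → ZMod p) :=
      { toFun := fun a => (a : Matrix (Fin n) (Fin n) (ZMod p)) *ᵥ v₀
        map_add' := by intro a b; simp [Matrix.add_mulVec]
        map_smul' := by intro c a; simp [Matrix.smul_mulVec] } with he
    have hinj : Function.Injective e := by
      rw [← LinearMap.ker_eq_bot]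
      apply LinearMap.ker_eq_bot'.2
      intro a ha0
      by_contra hne
      rcases hustruct a with h0 | ⟨i, rfl⟩
      · exact hne h0
      · have hval : ((u ^ i).val : Matrix (Fin n) (Fin n) (ZMod p)) *ᵥ v₀ = 0 := by
          rw [← coe_gen_pow]; exact ha0
        have : v₀ = 0 := by
          have h1 : ((u ^ i)⁻¹.val * (u ^ i).val) *ᵥ v₀ = 0 := by
            rw [← Matrix.mulVec_mulVec, hval, Matrix.mulVec_zero]
          rwa [(u ^ i).inv_mul, Matrix.one_mulVec] at h1
        exact hv₀ this
    have hbij : Function.Bijective e := by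
      rw [Nat.bijective_iff_injective_and_card]
      refine ⟨hinj, ?_⟩
      rw [hucard]
      simp [Nat.card_eq_fintype_card, ZMod.card]
    exact ⟨LinearEquiv.ofBijective e hbij, fun a => rfl⟩
  obtain ⟨Eg, hEg⟩ := mkE g hg
  obtain ⟨Eh, hEh⟩ := mkE h hh
  -- the conjugating map
  set X : (Fin n → ZMod p) ≃ₗ[ZMod p] (Fin n → ZMod p) :=
    (Eg.symm.trans σ.toLinearEquiv).trans Eh with hX
  have hXE : ∀ a : Fld p n g, X (Eg a) = Eh (σ a) := by
    intro a
    simp [hX]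
  have key : ∀ v : Fin n → ZMod p,
      X (g.val *ᵥ v) = ((σ (gen p n g) : Fld p n h) : Matrix (Fin n) (Fin n) (ZMod p)) *ᵥ X v := by
    intro v
    obtain ⟨a, rfl⟩ := Eg.surjective v
    have h1 : g.val *ᵥ Eg a = Eg (gen p n g * a) := by
      rw [hEg, hEg, Matrix.mulVec_mulVec]
      rfl
    rw [h1, hXE, hXE, _root_.map_mul, hEh, hEh]
    rw [Matrix.mulVec_mulVec]
    rfl
  -- translate to matrices
  set Xm : Matrix (Fin n) (Fin n) (ZMod p) := LinearMap.toMatrix' (X : (Fin n → ZMod p) →ₗ[ZMod p] _) with hXm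
  set Xm' : Matrix (Fin n) (Fin n) (ZMod p) := LinearMap.toMatrix' (X.symm : (Fin n → ZMod p) →ₗ[ZMod p] _) with hXm'
  have hXX' : Xm * Xm' = 1 := by
    rw [hXm, hXm', ← LinearMap.toMatrix'_comp]
    have : (X : (Fin n → ZMod p) →ₗ[ZMod p] _).comp (X.symm : (Fin n → ZMod p) →ₗ[ZMod p] _) =
        LinearMap.id := by
      apply LinearMap.ext; intro v; simp
    rw [this, LinearMap.toMatrix'_id]
  have hX'X : Xm' * Xm = 1 := by
    rw [hXm, hXm', ← LinearMap.toMatrix'_comp]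
    have : (X.symm : (Fin n → ZMod p) →ₗ[ZMod p] _).comp (X : (Fin n → ZMod p) →ₗ[ZMod p] _) =
        LinearMap.id := by
      apply LinearMap.ext; intro v; simp
    rw [this, LinearMap.toMatrix'_id]
  set s : Matrix (Fin n) (Fin n) (ZMod p) :=
    ((σ (gen p n g) : Fld p n h) : Matrix (Fin n) (Fin n) (ZMod p)) with hs
  have keyM : Xm * g.val = s * Xm := by
    rw [hXm, ← toMatrix'_mulVecLin (g.val), ← toMatrix'_mulVecLin s,
      ← LinearMap.toMatrix'_comp, ← LinearMap.toMatrix'_comp]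
    congr 1
    apply LinearMap.ext
    intro v
    simpa using key v
  -- σ (gen g) is a nonzero element of Fld h, hence a power of gen h
  have hσne : σ (gen p n g) ≠ 0 := by
    intro hcon
    have : gen p n g = 0 := by
      apply σ.injective
      rw [hcon, map_zero]
    have hval : (g.val : Matrix (Fin n) (Fin n) (ZMod p)) = 0 := congrArg Subtype.val this
    haveI : Nontrivial (Matrix (Fin n) (Fin n) (ZMod p)) := by infer_instance
    exact g.isUnit.ne_zero hval
  obtain ⟨k, hk⟩ : ∃ k : ℕ, σ (gen p n g) = gen p n h ^ k := by
    rcases hhstruct (σ (gen p n g)) with h0 | hk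
    · exact absurd h0 hσne
    · exact hk
  -- build the GL element
  set Xu : GL (Fin n) (ZMod p) := ⟨Xm, Xm', hXX', hX'X⟩ with hXu
  have hconj : Xu * g * Xu⁻¹ = h ^ k := by
    apply Units.ext
    show Xm * g.val * Xm' = (h ^ k).val
    rw [mul_assoc]
    calc Xm * (g.val * Xm') = Xm * g.val * Xm' := by rw [mul_assoc]
    _ = s * Xm * Xm' := by rw [keyM]
    _ = s * (Xm * Xm') := by rw [mul_assoc]
    _ = s := by rw [hXX', mul_one]
    _ = (h ^ k).val := by rw [hs, hk, coe_gen_pow]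
  refine ⟨Xu⁻¹, ?_⟩
  rw [inv_inv]
  rw [MonoidHom.map_zpowers]
  have happ : (MulAut.conj Xu).toMonoidHom g = h ^ k := by
    simpa [MulAut.conj_apply] using hconj
  rw [happ]
  -- ⟨h^k⟩ = ⟨h⟩ since h^k has full order
  have hordk : orderOf (h ^ k) = orderOf h := by
    rw [hh, ← hg, ← happ]
    exact orderOf_injective (MulAut.conj Xu).toMonoidHom (MulEquiv.injective _) g
  apply Subgroup.eq_of_le_of_card_ge
  · exact Subgroup.zpowers_le.2 (Subgroup.mem_zpowers_iff.2 ⟨(k : ℤ), by simp⟩)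
  · rw [Nat.card_zpowers, Nat.card_zpowers, hordk]
end

section
/- Let p be a prime, n ≥ 1, and let g ∈ GL_n(ZMod p) have order p^n − 1. Then the centralizer of g in GL_n(ZMod p) is exactly the cyclic subgroup ⟨g⟩ generated by g. -/
open Matrix
open scoped MatrixGroups
set_option maxHeartbeats 1000000

/-- The centralizer of a Singer cycle `g` in `GL n (ZMod p)` is exactly the cyclic
subgroup `⟨g⟩` it generates. -/
theorem singer_cycle_centralizer (p n : ℕ) (hp : p.Prime) (hn : 1 ≤ n)
    (g : GL (Fin n) (ZMod p)) (hg : orderOf g = p ^ n - 1) :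
    Subgroup.centralizer {g} = Subgroup.zpowers g := by
  classical
  haveI : Fact p.Prime := ⟨hp⟩
  haveI : Nonempty (Fin n) := ⟨⟨0, hn⟩⟩
  set K := ZMod p
  set M := Matrix (Fin n) (Fin n) K with hM
  set A : Subalgebra K M := Algebra.adjoin K {(g : M)} with hA
  have hpn2 : 2 ≤ p ^ n := by
    calc 2 ≤ p := hp.two_le
    _ = p ^ 1 := (pow_one p).symm
    _ ≤ p ^ n := Nat.pow_le_pow_right hp.pos hn
  -- membership in A via polynomials
  have hmem : ∀ m : M, m ∈ A ↔ ∃ q : Polynomial K, Polynomial.aeval (g : M) q = m := by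
    intro m
    rw [hA, Algebra.adjoin_singleton_eq_range_aeval]
    exact AlgHom.mem_range _
  -- g and its inverse are in A
  have hgA : (g : M) ∈ A := (hmem _).2 ⟨Polynomial.X, by simp⟩
  have hginv : ((g⁻¹ : GL (Fin n) K) : M) = (g : M) ^ (p ^ n - 2) := by
    have h1 : g ^ (p ^ n - 1) = 1 := by rw [← hg]; exact pow_orderOf_eq_one g
    have h2 : g * g ^ (p ^ n - 2) = 1 := by
      rw [← pow_succ']
      rw [show p ^ n - 2 + 1 = p ^ n - 1 by omega]
      exact h1
    rw [inv_eq_of_mul_eq_one_right h2]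
    exact Units.val_pow_eq_pow_val g _
  have hgAinv : ((g⁻¹ : GL (Fin n) K) : M) ∈ A := by
    rw [hginv]; exact pow_mem hgA _
  -- cardinality bound on A
  have cardA_le : Nat.card A ≤ p ^ n := by
    haveI : Finite (Polynomial.degreeLT K n) :=
      Finite.of_equiv _ (Polynomial.degreeLTEquiv K n).toEquiv.symm
    have hsurj : Function.Surjective
        (fun q : Polynomial.degreeLT K n =>
          (⟨Polynomial.aeval (g : M) q.1, (hmem _).2 ⟨q.1, rfl⟩⟩ : A)) := by
      rintro ⟨a, ha⟩
      obtain ⟨q, hq⟩ := (hmem a).1 ha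
      have hmon := Matrix.charpoly_monic (g : M)
      have hdeg : (q %ₘ Matrix.charpoly (g : M)).degree < n := by
        have h1 := Polynomial.degree_modByMonic_lt q hmon
        have h2 : (Matrix.charpoly (g : M)).degree = (n : ℕ) := by
          rw [Matrix.charpoly_degree_eq_dim, Fintype.card_fin]
        rw [← h2]
        exact h1
      refine ⟨⟨q %ₘ Matrix.charpoly (g : M), Polynomial.mem_degreeLT.2 hdeg⟩, ?_⟩
      apply Subtype.ext
      show Polynomial.aeval (g : M) _ = a
      rw [Polynomial.aeval_modByMonic_eq_self_of_root (Matrix.aeval_self_charpoly _), hq]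
    calc Nat.card A ≤ Nat.card (Polynomial.degreeLT K n) :=
          Nat.card_le_card_of_surjective _ hsurj
      _ = Nat.card (Fin n → K) := Nat.card_congr (Polynomial.degreeLTEquiv K n).toEquiv
      _ = p ^ n := by
          rw [Nat.card_eq_fintype_card, Fintype.card_fun, ZMod.card, Fintype.card_fin]
  -- the unit of A corresponding to g
  have hmul1 : (⟨(g : M), hgA⟩ * ⟨((g⁻¹ : GL (Fin n) K) : M), hgAinv⟩ : A) = 1 :=
    Subtype.ext g.mul_inv
  have hmul2 : (⟨((g⁻¹ : GL (Fin n) K) : M), hgAinv⟩ * ⟨(g : M), hgA⟩ : A) = 1 :=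
    Subtype.ext g.inv_mul
  set u : Aˣ := ⟨⟨(g : M), hgA⟩, ⟨((g⁻¹ : GL (Fin n) K) : M), hgAinv⟩, hmul1, hmul2⟩ with hu
  -- the monoid hom A^x -> M^x = GL
  set f : Aˣ →* Mˣ := Units.map (A.val : A →* M) with hf
  have hfinj : Function.Injective f := by
    intro a b hab
    exact Units.ext (Subtype.ext (congrArg Units.val hab))
  have hfu : f u = g := Units.ext rfl
  have hordu : orderOf u = p ^ n - 1 := by
    rw [← hg, ← hfu]
    exact (orderOf_injective f hfinj u).symm
  haveI : Nontrivial A := nontrivial_of_ne 1 0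
    (fun h => one_ne_zero (congrArg Subtype.val h : (1 : M) = 0))
  have cardUnits_le : Nat.card Aˣ < Nat.card A := by
    letI : Fintype A := Fintype.ofFinite A
    letI : Fintype Aˣ := Fintype.ofFinite Aˣ
    rw [Nat.card_eq_fintype_card, Nat.card_eq_fintype_card]
    apply Fintype.card_lt_of_injective_of_notMem (Units.val : Aˣ → A) Units.val_injective (b := 0)
    rintro ⟨w, hw⟩
    have h1 := w.mul_inv
    rw [hw, zero_mul] at h1
    exact one_ne_zero h1.symm
  have cardUnits_ge : p ^ n - 1 ≤ Nat.card Aˣ := by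
    rw [← hordu]
    exact Nat.le_of_dvd Nat.card_pos (orderOf_dvd_natCard u)
  have cardA_eq : Nat.card A = p ^ n := by omega
  have cardUnits_eq : Nat.card Aˣ = p ^ n - 1 := by omega
  -- every nonzero element of A is a unit
  have hunit : ∀ a : A, a ≠ 0 → ∃ w : Aˣ, (w : A) = a := by
    letI : Fintype A := Fintype.ofFinite A
    have hcard : Nat.card Aˣ = Nat.card {b : A // b ≠ 0} := by
      have h2 : Nat.card {b : A // b ≠ 0} = Nat.card A - 1 := by
        rw [Nat.card_eq_fintype_card, Nat.card_eq_fintype_card]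
        have h := Fintype.card_subtype_compl (fun b : A => b = 0)
        rw [Fintype.card_subtype_eq (0 : A)] at h
        convert h using 2
      omega
    have hψ : Function.Bijective
        (fun w : Aˣ => (⟨(w : A), w.ne_zero⟩ : {b : A // b ≠ 0})) := by
      rw [Nat.bijective_iff_injective_and_card]
      exact ⟨fun a b hab => Units.ext (congrArg Subtype.val hab), hcard⟩
    intro a ha
    obtain ⟨w, hw⟩ := hψ.2 ⟨a, ha⟩
    exact ⟨w, congrArg Subtype.val hw⟩
  -- u generates Aˣ
  have hugen : ∀ w : Aˣ, w ∈ Subgroup.zpowers u := by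
    have : Subgroup.zpowers u = ⊤ := by
      apply Subgroup.eq_top_of_card_eq
      rw [Nat.card_zpowers, hordu, cardUnits_eq]
    intro w; rw [this]; trivial
  -- the fixed nonzero vector
  set v : Fin n → K := fun _ => 1 with hv
  have hvne : v ≠ 0 := by
    intro h
    have := congrFun h ⟨0, hn⟩
    simp [hv] at this
  -- the evaluation map is bijective
  have hbij : Function.Bijective (fun a : A => (a : M) *ᵥ v) := by
    rw [Nat.bijective_iff_injective_and_card]
    constructor
    · intro a b hab
      replace hab : (a : M) *ᵥ v = (b : M) *ᵥ v := hab
      by_contra hne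
      have hd : a - b ≠ 0 := sub_ne_zero.2 hne
      obtain ⟨w, hw⟩ := hunit (a - b) hd
      have h0 : ((a - b : A) : M) *ᵥ v = 0 := by
        show ((a : M) - (b : M)) *ᵥ v = 0
        rw [Matrix.sub_mulVec, hab, sub_self]
      have h1 : ((w⁻¹ * w : Aˣ) : A) = 1 := by rw [inv_mul_cancel]; rfl
      have : v = 0 := by
        calc v = (((w⁻¹ * w : Aˣ) : A) : M) *ᵥ v := by rw [h1]; simp
          _ = (((w⁻¹ : Aˣ) : A) : M) *ᵥ ((((w : Aˣ) : A) : M) *ᵥ v) := by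
              rw [Matrix.mulVec_mulVec]; rfl
          _ = 0 := by rw [hw, h0, Matrix.mulVec_zero]
      exact hvne this
    · rw [cardA_eq, Nat.card_eq_fintype_card, Fintype.card_fun, ZMod.card, Fintype.card_fin]
  -- final extensionality
  apply le_antisymm
  · intro c hc
    have hcg : (c : M) * (g : M) = (g : M) * (c : M) := by
      have := Subgroup.mem_centralizer_iff.1 hc g rfl
      exact (congrArg Units.val this).symm
    -- c commutes with everything in A
    have hcomm : ∀ a : A, (c : M) * (a : M) = (a : M) * (c : M) := fun a =>
      Algebra.commute_of_mem_adjoin_singleton_of_commute a.2 hcg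
    obtain ⟨a, ha⟩ := hbij.2 ((c : M) *ᵥ v)
    have hAcomm : ∀ x y : A, (x : M) * (y : M) = (y : M) * (x : M) := by
      intro x y
      obtain ⟨q1, hq1⟩ := (hmem _).1 x.2
      obtain ⟨q2, hq2⟩ := (hmem _).1 y.2
      rw [← hq1, ← hq2, ← _root_.map_mul, ← _root_.map_mul, _root_.mul_comm q1 q2]
    have hca : (c : M) = (a : M) := by
      have hall : ∀ w : Fin n → K, (c : M) *ᵥ w = (a : M) *ᵥ w := by
        intro w
        obtain ⟨b, hb⟩ := hbij.2 w
        rw [← hb]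
        calc (c : M) *ᵥ ((b : M) *ᵥ v) = ((c : M) * (b : M)) *ᵥ v := Matrix.mulVec_mulVec ..
          _ = ((b : M) * (c : M)) *ᵥ v := by rw [hcomm b]
          _ = (b : M) *ᵥ ((c : M) *ᵥ v) := (Matrix.mulVec_mulVec ..).symm
          _ = (b : M) *ᵥ ((a : M) *ᵥ v) := by rw [← ha]
          _ = ((b : M) * (a : M)) *ᵥ v := Matrix.mulVec_mulVec ..
          _ = ((a : M) * (b : M)) *ᵥ v := by rw [hAcomm b a]
          _ = (a : M) *ᵥ ((b : M) *ᵥ v) := (Matrix.mulVec_mulVec ..).symm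
      ext i j
      have := congrFun (hall (Pi.single j 1)) i
      simpa using this
    have hane : a ≠ 0 := by
      intro h
      rw [h] at hca
      have h1 : (1 : M) = 0 := by
        calc (1 : M) = (c : M) * ((c⁻¹ : GL (Fin n) K) : M) := c.mul_inv.symm
        _ = 0 := by rw [hca]; simp
      exact one_ne_zero h1
    obtain ⟨w, hw⟩ := hunit a hane
    obtain ⟨k, hk⟩ := hugen w
    refine ⟨k, ?_⟩
    have : f w = c := Units.ext (show ((w : A) : M) = (c : M) by rw [hw, ← hca])
    rw [← this, ← hk, map_zpow, hfu]
  · rw [Subgroup.zpowers_le]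
    exact Subgroup.mem_centralizer_iff.2 (fun h hh => by rw [Set.mem_singleton_iff.1 hh])
end

section
/- Let p be a prime, n ≥ 1, and let g ∈ GL_n(ZMod p) have order p^n − 1. Then the normalizer in GL_n(ZMod p) of the cyclic subgroup ⟨g⟩ has cardinality n · (p^n − 1); equivalently, the quotient of the normalizer of ⟨g⟩ by ⟨g⟩ is a cyclic group of order n. -/
open Matrix
open scoped MatrixGroups

open Polynomial

lemma singer_card_adjoin_le (p n : ℕ) (hp : p.Prime) (hn : 1 ≤ n)
    (A : Matrix (Fin n) (Fin n) (ZMod p)) :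
    Nat.card (Algebra.adjoin (ZMod p) {A}) ≤ p ^ n := by
  haveI : Fact p.Prime := ⟨hp⟩
  haveI : NeZero n := ⟨by omega⟩
  set m := minpoly (ZMod p) A with hm
  have hAint : IsIntegral (ZMod p) A := ⟨A.charpoly, A.charpoly_monic, A.aeval_self_charpoly⟩
  have hmon : m.Monic := minpoly.monic hAint
  have hdm : m.natDegree ≤ n := by
    have hdvd : m ∣ A.charpoly := minpoly.dvd (ZMod p) A A.aeval_self_charpoly
    calc m.natDegree ≤ A.charpoly.natDegree :=
          Polynomial.natDegree_le_of_dvd hdvd (A.charpoly_monic.ne_zero)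
      _ = n := by simp
  set W : Submodule (ZMod p) (Matrix (Fin n) (Fin n) (ZMod p)) :=
    Submodule.span (ZMod p) (Set.range fun i : Fin n => A ^ (i : ℕ)) with hW
  have hsub : (Algebra.adjoin (ZMod p) {A} : Set (Matrix (Fin n) (Fin n) (ZMod p)))
      ⊆ (W : Set (Matrix (Fin n) (Fin n) (ZMod p))) := by
    intro x hx
    rw [Algebra.adjoin_singleton_eq_range_aeval] at hx
    obtain ⟨q, hq⟩ := hx
    have key : (aeval A) q = (aeval A) (q %ₘ m) := by
      conv_lhs => rw [← Polynomial.modByMonic_add_div q m]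
      rw [_root_.map_add, _root_.map_mul, minpoly.aeval, zero_mul, add_zero]
    have hx' : x = (aeval A) (q %ₘ m) := by rw [← key]; exact hq.symm
    rw [hx']
    have hdeg : (q %ₘ m).natDegree < n := by
      rcases eq_or_ne m 1 with h1 | h1
      · rw [h1, Polynomial.modByMonic_one]; simpa using (by omega : 0 < n)
      · exact lt_of_lt_of_le (Polynomial.natDegree_modByMonic_lt q hmon h1) hdm
    rw [Polynomial.aeval_eq_sum_range' hdeg]
    refine Submodule.sum_mem _ fun i hi => ?_
    have hi' : i < n := Finset.mem_range.mp hi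
    exact Submodule.smul_mem _ _ (Submodule.subset_span ⟨⟨i, hi'⟩, rfl⟩)
  have h1 : Nat.card (Algebra.adjoin (ZMod p) {A}) ≤ Nat.card W :=
    Nat.card_le_card_of_injective (Set.inclusion hsub) (Set.inclusion_injective hsub)
  refine h1.trans ?_
  haveI : Fintype W := Fintype.ofFinite _
  have hrk : Module.finrank (ZMod p) W ≤ n := by
    classical
    refine (finrank_span_le_card _).trans ?_
    calc (Set.range fun i : Fin n => A ^ (i:ℕ)).toFinset.card
        ≤ Fintype.card (Fin n) := by
          rw [Set.toFinset_range]
          exact (Finset.card_image_le).trans (by simp)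
      _ = n := by simp
  have hcard : Fintype.card W = (Fintype.card (ZMod p)) ^ Module.finrank (ZMod p) W :=
    Module.card_eq_pow_finrank
  rw [Nat.card_eq_fintype_card, hcard, ZMod.card]
  exact Nat.pow_le_pow_right hp.pos hrk

lemma singer_adjoin_eq (p n : ℕ) (hp : p.Prime) (hn : 1 ≤ n)
    (g : GL (Fin n) (ZMod p)) (hg : orderOf g = p ^ n - 1) :
    ((Algebra.adjoin (ZMod p) {(g : Matrix (Fin n) (Fin n) (ZMod p))}) :
        Set (Matrix (Fin n) (Fin n) (ZMod p))) =
      insert 0 ((fun i : ℕ => (g : Matrix (Fin n) (Fin n) (ZMod p)) ^ i) ''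
        Set.Iio (p ^ n - 1)) := by
  haveI : Fact p.Prime := ⟨hp⟩
  haveI : NeZero n := ⟨by omega⟩
  set A : Matrix (Fin n) (Fin n) (ZMod p) := (g : Matrix (Fin n) (Fin n) (ZMod p)) with hA
  have hordA : orderOf A = p ^ n - 1 := by rw [orderOf_units]; exact hg
  have hq1 : 1 ≤ p ^ n := Nat.one_le_pow n p hp.pos
  set S : Set (Matrix (Fin n) (Fin n) (ZMod p)) :=
    insert 0 ((fun i : ℕ => A ^ i) '' Set.Iio (p ^ n - 1)) with hS
  have hSsub : S ⊆ (Algebra.adjoin (ZMod p) {A} : Set (Matrix (Fin n) (Fin n) (ZMod p))) := by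
    rintro x (rfl | ⟨i, _, rfl⟩)
    · exact Subalgebra.zero_mem _
    · exact Subalgebra.pow_mem _ (Algebra.self_mem_adjoin_singleton _ _) _
  have hzero_notmem : (0 : Matrix (Fin n) (Fin n) (ZMod p)) ∉
      ((fun i : ℕ => A ^ i) '' Set.Iio (p ^ n - 1)) := by
    rintro ⟨i, _, hzero⟩
    have h1 : A ^ i = ((g ^ i : GL (Fin n) (ZMod p)) : Matrix (Fin n) (Fin n) (ZMod p)) := by
      rw [hA, Units.val_pow_eq_pow_val]
    have := Units.ne_zero (g ^ i)
    rw [← h1] at this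
    exact this hzero
  have hinj : Set.InjOn (fun i : ℕ => A ^ i) (Set.Iio (p ^ n - 1)) := by
    have := pow_injOn_Iio_orderOf (x := A)
    rwa [hordA] at this
  have hScard : S.ncard = p ^ n := by
    rw [hS, Set.ncard_insert_of_notMem hzero_notmem
      ((Set.finite_Iio _).image _), Set.ncard_image_of_injOn hinj]
    rw [← Finset.coe_Iio, Set.ncard_coe_finset, Nat.card_Iio]
    omega
  have hfin : (Algebra.adjoin (ZMod p) {A} : Set (Matrix (Fin n) (Fin n) (ZMod p))).Finite :=
    Set.toFinite _
  have hcard_le : (Algebra.adjoin (ZMod p) {A} :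
      Set (Matrix (Fin n) (Fin n) (ZMod p))).ncard ≤ S.ncard := by
    rw [hScard, ← Nat.card_coe_set_eq]
    exact singer_card_adjoin_le p n hp hn A
  exact (Set.eq_of_subset_of_ncard_le hSsub hcard_le hfin).symm

-- membership characterization
lemma singer_mem_adjoin (p n : ℕ) (hp : p.Prime) (hn : 1 ≤ n)
    (g : GL (Fin n) (ZMod p)) (hg : orderOf g = p ^ n - 1)
    {x : Matrix (Fin n) (Fin n) (ZMod p)}
    (hx : x ∈ Algebra.adjoin (ZMod p) {(g : Matrix (Fin n) (Fin n) (ZMod p))}) :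
    x = 0 ∨ ∃ i : ℕ, x = (g ^ i : GL (Fin n) (ZMod p)) := by
  have := singer_adjoin_eq p n hp hn g hg
  have hx' : x ∈ (insert 0 ((fun i : ℕ => (g : Matrix (Fin n) (Fin n) (ZMod p)) ^ i) ''
      Set.Iio (p ^ n - 1))) := this ▸ hx
  rcases hx' with rfl | ⟨i, _, rfl⟩
  · exact Or.inl rfl
  · exact Or.inr ⟨i, by rw [Units.val_pow_eq_pow_val]⟩

lemma singer_card_adjoin (p n : ℕ) (hp : p.Prime) (hn : 1 ≤ n)
    (g : GL (Fin n) (ZMod p)) (hg : orderOf g = p ^ n - 1) :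
    Nat.card (Algebra.adjoin (ZMod p) {(g : Matrix (Fin n) (Fin n) (ZMod p))}) = p ^ n := by
  haveI : Fact p.Prime := ⟨hp⟩
  haveI : NeZero n := ⟨by omega⟩
  rw [← SetLike.coe_sort_coe, Nat.card_coe_set_eq, singer_adjoin_eq p n hp hn g hg]
  have hordA : orderOf ((g : Matrix (Fin n) (Fin n) (ZMod p))) = p ^ n - 1 := by
    rw [orderOf_units]; exact hg
  have hzero_notmem : (0 : Matrix (Fin n) (Fin n) (ZMod p)) ∉
      ((fun i : ℕ => (g : Matrix (Fin n) (Fin n) (ZMod p)) ^ i) '' Set.Iio (p ^ n - 1)) := by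
    rintro ⟨i, _, hzero⟩
    have h1 : (g : Matrix (Fin n) (Fin n) (ZMod p)) ^ i =
        ((g ^ i : GL (Fin n) (ZMod p)) : Matrix (Fin n) (Fin n) (ZMod p)) := by
      rw [Units.val_pow_eq_pow_val]
    have := Units.ne_zero (g ^ i)
    rw [← h1] at this
    exact this hzero
  have hinj : Set.InjOn (fun i : ℕ => (g : Matrix (Fin n) (Fin n) (ZMod p)) ^ i)
      (Set.Iio (p ^ n - 1)) := by
    have := pow_injOn_Iio_orderOf (x := (g : Matrix (Fin n) (Fin n) (ZMod p)))
    rwa [hordA] at this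
  rw [Set.ncard_insert_of_notMem hzero_notmem ((Set.finite_Iio _).image _),
    Set.ncard_image_of_injOn hinj, ← Finset.coe_Iio, Set.ncard_coe_finset, Nat.card_Iio]
  have : 1 ≤ p ^ n := Nat.one_le_pow n p hp.pos
  omega

-- every nonzero elt of adjoin is an invertible matrix, and mulVec injectivity helper
lemma singer_unit_mulVec (p n : ℕ) (u : GL (Fin n) (ZMod p)) (w : Fin n → ZMod p)
    (h : (u : Matrix (Fin n) (Fin n) (ZMod p)) *ᵥ w = 0) : w = 0 := by
  have : ((u⁻¹ : GL (Fin n) (ZMod p)) : Matrix (Fin n) (Fin n) (ZMod p)) *ᵥ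
      ((u : Matrix (Fin n) (Fin n) (ZMod p)) *ᵥ w) = w := by
    rw [Matrix.mulVec_mulVec, ← Units.val_mul, inv_mul_cancel, Units.val_one, Matrix.one_mulVec]
  rw [h, Matrix.mulVec_zero] at this
  exact this.symm

lemma singer_bij (p n : ℕ) (hp : p.Prime) (hn : 1 ≤ n)
    (g : GL (Fin n) (ZMod p)) (hg : orderOf g = p ^ n - 1) :
    Function.Bijective (fun c : (Algebra.adjoin (ZMod p) {(g : Matrix (Fin n) (Fin n) (ZMod p))})
      => (c : Matrix (Fin n) (Fin n) (ZMod p)) *ᵥ (Pi.single (⟨0, hn⟩ : Fin n) (1 : ZMod p))) := by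
  haveI : Fact p.Prime := ⟨hp⟩
  haveI : NeZero n := ⟨by omega⟩
  set v : Fin n → ZMod p := Pi.single (⟨0, hn⟩ : Fin n) (1 : ZMod p) with hv
  have hvne : v ≠ 0 := by
    intro h
    have := congrFun h ⟨0, hn⟩
    simp [hv] at this
  have hinj : Function.Injective
      (fun c : (Algebra.adjoin (ZMod p) {(g : Matrix (Fin n) (Fin n) (ZMod p))})
        => (c : Matrix (Fin n) (Fin n) (ZMod p)) *ᵥ v) := by
    intro c1 c2 hc
    by_contra hne
    have hd : ((c1 : Matrix (Fin n) (Fin n) (ZMod p)) - (c2 : Matrix (Fin n) (Fin n) (ZMod p))) *ᵥ v = 0 := by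
      simp only at hc
      rw [Matrix.sub_mulVec, hc, sub_self]
    have hdm : ((c1 : Matrix (Fin n) (Fin n) (ZMod p)) - (c2 : Matrix (Fin n) (Fin n) (ZMod p))) ∈
        Algebra.adjoin (ZMod p) {(g : Matrix (Fin n) (Fin n) (ZMod p))} :=
      Subalgebra.sub_mem _ c1.2 c2.2
    rcases singer_mem_adjoin p n hp hn g hg hdm with h0 | ⟨i, hi⟩
    · exact hne (Subtype.ext (by rwa [sub_eq_zero] at h0))
    · rw [hi] at hd
      exact hvne (singer_unit_mulVec p n (g ^ i) v hd)
  haveI : Fintype (Algebra.adjoin (ZMod p) {(g : Matrix (Fin n) (Fin n) (ZMod p))}) :=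
    Fintype.ofFinite _
  rw [Fintype.bijective_iff_injective_and_card]
  refine ⟨hinj, ?_⟩
  rw [← Nat.card_eq_fintype_card, singer_card_adjoin p n hp hn g hg, ← Nat.card_eq_fintype_card]
  simp [Nat.card_eq_fintype_card, ZMod.card]

lemma singer_ext_of_mulVec (p n : ℕ) {x y : Matrix (Fin n) (Fin n) (ZMod p)}
    (h : ∀ w, x *ᵥ w = y *ᵥ w) : x = y := by
  ext i j
  have := congrFun (h (Pi.single j 1)) i
  simpa using this

lemma singer_adjoin_commute (p n : ℕ) (hp : p.Prime) (hn : 1 ≤ n)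
    (g : GL (Fin n) (ZMod p)) (hg : orderOf g = p ^ n - 1)
    {a b : Matrix (Fin n) (Fin n) (ZMod p)}
    (ha : a ∈ Algebra.adjoin (ZMod p) {(g : Matrix (Fin n) (Fin n) (ZMod p))})
    (hb : b ∈ Algebra.adjoin (ZMod p) {(g : Matrix (Fin n) (Fin n) (ZMod p))}) :
    Commute a b := by
  rcases singer_mem_adjoin p n hp hn g hg ha with rfl | ⟨i, rfl⟩
  · exact Commute.zero_left _
  rcases singer_mem_adjoin p n hp hn g hg hb with rfl | ⟨j, rfl⟩
  · exact Commute.zero_right _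
  rw [Units.val_pow_eq_pow_val, Units.val_pow_eq_pow_val]
  exact (Commute.refl _).pow_pow i j

lemma singer_commute_mem (p n : ℕ) (hp : p.Prime) (hn : 1 ≤ n)
    (g : GL (Fin n) (ZMod p)) (hg : orderOf g = p ^ n - 1)
    {x : Matrix (Fin n) (Fin n) (ZMod p)}
    (hx : Commute x (g : Matrix (Fin n) (Fin n) (ZMod p))) :
    x ∈ Algebra.adjoin (ZMod p) {(g : Matrix (Fin n) (Fin n) (ZMod p))} := by
  obtain ⟨c, hc⟩ := (singer_bij p n hp hn g hg).2 (x *ᵥ Pi.single (⟨0, hn⟩ : Fin n) (1 : ZMod p))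
  simp only at hc
  have hcomm : ∀ y ∈ Algebra.adjoin (ZMod p) {(g : Matrix (Fin n) (Fin n) (ZMod p))},
      Commute x y := by
    intro y hy
    rcases singer_mem_adjoin p n hp hn g hg hy with rfl | ⟨i, rfl⟩
    · exact Commute.zero_right _
    · rw [Units.val_pow_eq_pow_val]
      exact hx.pow_right i
  have key : ∀ w, x *ᵥ w = (c : Matrix (Fin n) (Fin n) (ZMod p)) *ᵥ w := by
    intro w
    obtain ⟨c', hc'⟩ := (singer_bij p n hp hn g hg).2 w
    simp only at hc'
    rw [← hc', Matrix.mulVec_mulVec, (hcomm _ c'.2).eq, ← Matrix.mulVec_mulVec, ← hc,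
      Matrix.mulVec_mulVec, Matrix.mulVec_mulVec,
      (singer_adjoin_commute p n hp hn g hg c'.2 c.2).eq]
  have : x = (c : Matrix (Fin n) (Fin n) (ZMod p)) := singer_ext_of_mulVec p n key
  rw [this]
  exact c.2

lemma singer_frobenius (p n : ℕ) (hp : p.Prime) (hn : 1 ≤ n)
    (g : GL (Fin n) (ZMod p)) (hg : orderOf g = p ^ n - 1) :
    ∃ φ : GL (Fin n) (ZMod p), φ * g * φ⁻¹ = g ^ p := by
  haveI : Fact p.Prime := ⟨hp⟩
  haveI : NeZero n := ⟨by omega⟩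
  set K := Algebra.adjoin (ZMod p) {(g : Matrix (Fin n) (Fin n) (ZMod p))} with hK
  letI : CommRing K :=
    { (inferInstance : Ring K) with
      mul_comm := fun a b => Subtype.ext (by
        rw [MulMemClass.coe_mul, MulMemClass.coe_mul]
        exact (singer_adjoin_commute p n hp hn g hg a.2 b.2).eq) }
  haveI : Nontrivial K := ⟨⟨1, 0, fun h => by
    have := congrArg (Subtype.val) h
    rw [OneMemClass.coe_one, ZeroMemClass.coe_zero] at this
    exact one_ne_zero this⟩⟩
  haveI : CharP K p := charP_of_injective_algebraMap
    (algebraMap (ZMod p) K).injective p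
  set v : Fin n → ZMod p := Pi.single (⟨0, hn⟩ : Fin n) (1 : ZMod p) with hv
  set E : K ≃ (Fin n → ZMod p) := Equiv.ofBijective _ (singer_bij p n hp hn g hg) with hE
  have hEapp : ∀ c : K, E c = (c : Matrix (Fin n) (Fin n) (ZMod p)) *ᵥ v := fun c => rfl
  have hEadd : ∀ c1 c2 : K, E (c1 + c2) = E c1 + E c2 := by
    intro c1 c2
    simp only [hEapp, AddMemClass.coe_add, Matrix.add_mulVec]
  have hEsmul : ∀ (a : ZMod p) (c : K), E (a • c) = a • E c := by
    intro a c
    simp only [hEapp, SetLike.val_smul, Matrix.smul_mulVec]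
  set Flin : (Fin n → ZMod p) →ₗ[ZMod p] (Fin n → ZMod p) :=
    { toFun := fun w => E ((E.symm w) ^ p)
      map_add' := by
        intro w1 w2
        show E ((E.symm (w1 + w2)) ^ p) = E ((E.symm w1) ^ p) + E ((E.symm w2) ^ p)
        have hsymm : E.symm (w1 + w2) = E.symm w1 + E.symm w2 := by
          apply E.injective
          rw [hEadd, E.apply_symm_apply, E.apply_symm_apply, E.apply_symm_apply]
        rw [hsymm, add_pow_char, hEadd]
      map_smul' := by
        intro a w
        show E ((E.symm (a • w)) ^ p) = (RingHom.id (ZMod p)) a • E ((E.symm w) ^ p)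
        have hsymm : E.symm (a • w) = a • E.symm w := by
          apply E.injective
          rw [hEsmul, E.apply_symm_apply, E.apply_symm_apply]
        rw [hsymm]
        simp only [RingHom.id_apply]
        rw [← hEsmul]
        congr 1
        rw [Algebra.smul_def, Algebra.smul_def, mul_pow, ← map_pow, ZMod.pow_card] } with hFlin
  have hfrobinj : Function.Injective (fun c : K => c ^ p) := by
    intro c1 c2 hc
    simp only at hc
    have hzero : (c1 - c2) ^ p = 0 := by rw [sub_pow_char, hc, sub_self]
    by_contra hne
    have hsub : ((c1 - c2 : K) : Matrix (Fin n) (Fin n) (ZMod p)) ∈ K := (c1 - c2).2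
    rcases singer_mem_adjoin p n hp hn g hg hsub with h0 | ⟨i, hi⟩
    · refine hne (sub_eq_zero.mp ?_)
      exact Subtype.ext (by rw [h0, ZeroMemClass.coe_zero])
    · have hval : ((c1 - c2 : K) : Matrix (Fin n) (Fin n) (ZMod p)) ^ p = 0 := by
        have := congrArg Subtype.val hzero
        rwa [SubmonoidClass.coe_pow, ZeroMemClass.coe_zero] at this
      rw [hi, ← Units.val_pow_eq_pow_val] at hval
      exact Units.ne_zero _ hval
  have hfrobbij : Function.Bijective (fun c : K => c ^ p) :=
    Finite.injective_iff_bijective.mp hfrobinj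
  have hFbij : Function.Bijective Flin := by
    show Function.Bijective (fun w => E ((E.symm w) ^ p))
    exact E.bijective.comp (hfrobbij.comp E.symm.bijective)
  set Feq : (Fin n → ZMod p) ≃ₗ[ZMod p] (Fin n → ZMod p) :=
    LinearEquiv.ofBijective Flin hFbij with hFeq
  set φM := LinearMap.toMatrix' Flin with hφM
  set φN := LinearMap.toMatrix' (Feq.symm : (Fin n → ZMod p) →ₗ[ZMod p] (Fin n → ZMod p)) with hφN
  have hmul1 : φM * φN = 1 := by
    rw [hφM, hφN, ← LinearMap.toMatrix'_comp, ← LinearMap.toMatrix'_id]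
    exact congrArg _ (LinearMap.ext fun w => Feq.apply_symm_apply w)
  have hmul2 : φN * φM = 1 := by
    rw [hφM, hφN, ← LinearMap.toMatrix'_comp, ← LinearMap.toMatrix'_id]
    exact congrArg _ (LinearMap.ext fun w => Feq.symm_apply_apply w)
  set φ : GL (Fin n) (ZMod p) := ⟨φM, φN, hmul1, hmul2⟩ with hφ
  have hφMv : ∀ w, φM *ᵥ w = Flin w := by
    intro w
    rw [hφM, ← Matrix.toLin'_apply, Matrix.toLin'_toMatrix']
  have hgK : (g : Matrix (Fin n) (Fin n) (ZMod p)) ∈ K := Algebra.self_mem_adjoin_singleton _ _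
  set gK : K := ⟨(g : Matrix (Fin n) (Fin n) (ZMod p)), hgK⟩ with hgKdef
  have key : φM * (g : Matrix (Fin n) (Fin n) (ZMod p)) =
      ((g : Matrix (Fin n) (Fin n) (ZMod p)) ^ p) * φM := by
    apply singer_ext_of_mulVec p n
    intro w
    obtain ⟨c, rfl⟩ := E.surjective w
    rw [← Matrix.mulVec_mulVec, ← Matrix.mulVec_mulVec]
    have h1 : (g : Matrix (Fin n) (Fin n) (ZMod p)) *ᵥ E c = E (gK * c) := by
      rw [hEapp, hEapp, MulMemClass.coe_mul, ← Matrix.mulVec_mulVec]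
    rw [h1, hφMv, hφMv]
    have h2 : Flin (E (gK * c)) = E ((gK * c) ^ p) := by
      show E ((E.symm (E (gK * c))) ^ p) = _
      rw [E.symm_apply_apply]
    have h3 : Flin (E c) = E (c ^ p) := by
      show E ((E.symm (E c)) ^ p) = _
      rw [E.symm_apply_apply]
    rw [h2, h3, mul_pow, hEapp, hEapp, MulMemClass.coe_mul, ← Matrix.mulVec_mulVec]
    congr 1
  refine ⟨φ, ?_⟩
  apply Units.ext
  have hφval : (φ : Matrix (Fin n) (Fin n) (ZMod p)) = φM := rfl
  rw [Units.val_mul, Units.val_mul, hφval, key]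
  rw [mul_assoc]
  have : (φ : Matrix (Fin n) (Fin n) (ZMod p)) * ((φ⁻¹ : GL (Fin n) (ZMod p)) :
      Matrix (Fin n) (Fin n) (ZMod p)) = 1 := by
    rw [← Units.val_mul, mul_inv_cancel, Units.val_one]
  rw [hφval] at this
  rw [this, mul_one, Units.val_pow_eq_pow_val]

-- conjugation as an algebra equiv
def singerConj (p n : ℕ) (x : GL (Fin n) (ZMod p)) :
    Matrix (Fin n) (Fin n) (ZMod p) ≃ₐ[ZMod p] Matrix (Fin n) (Fin n) (ZMod p) where
  toFun y := (x : Matrix (Fin n) (Fin n) (ZMod p)) * y *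
    ((x⁻¹ : GL (Fin n) (ZMod p)) : Matrix (Fin n) (Fin n) (ZMod p))
  invFun y := ((x⁻¹ : GL (Fin n) (ZMod p)) : Matrix (Fin n) (Fin n) (ZMod p)) * y *
    (x : Matrix (Fin n) (Fin n) (ZMod p))
  left_inv y := by
    simp only [← mul_assoc]
    rw [← Units.val_mul, inv_mul_cancel, Units.val_one, one_mul, mul_assoc,
      ← Units.val_mul, inv_mul_cancel, Units.val_one, mul_one]
  right_inv y := by
    simp only [← mul_assoc]
    rw [← Units.val_mul, mul_inv_cancel, Units.val_one, one_mul, mul_assoc,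
      ← Units.val_mul, mul_inv_cancel, Units.val_one, mul_one]
  map_mul' a b := by
    have : ((x⁻¹ : GL (Fin n) (ZMod p)) : Matrix (Fin n) (Fin n) (ZMod p)) *
        ((x : GL (Fin n) (ZMod p)) : Matrix (Fin n) (Fin n) (ZMod p)) = 1 := by
      rw [← Units.val_mul, inv_mul_cancel, Units.val_one]
    calc (x : Matrix (Fin n) (Fin n) (ZMod p)) * (a * b) * _
        = (↑x * a * (↑x⁻¹ * ↑x) * b * ↑x⁻¹ :  Matrix (Fin n) (Fin n) (ZMod p)) := by
          rw [this]; simp [mul_assoc]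
      _ = _ := by simp only [mul_assoc]
  map_add' a b := by
    show (x : Matrix (Fin n) (Fin n) (ZMod p)) * (a + b) * _ = _
    rw [mul_add, add_mul]
  commutes' r := by
    have : (algebraMap (ZMod p) (Matrix (Fin n) (Fin n) (ZMod p)) r) *
        (x : Matrix (Fin n) (Fin n) (ZMod p)) =
        (x : Matrix (Fin n) (Fin n) (ZMod p)) *
        (algebraMap (ZMod p) (Matrix (Fin n) (Fin n) (ZMod p)) r) :=
      (Algebra.commutes r _)
    show (x : Matrix (Fin n) (Fin n) (ZMod p)) *
      (algebraMap (ZMod p) (Matrix (Fin n) (Fin n) (ZMod p)) r) * _ = _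
    rw [← this, mul_assoc, ← Units.val_mul, mul_inv_cancel, Units.val_one, mul_one]

lemma singer_subgroup_eq_of_le_of_card_le {G : Type*} [Group G] [Finite G]
    {H K : Subgroup G} (h : H ≤ K) (hc : Nat.card K ≤ Nat.card H) : K = H := by
  apply SetLike.ext'
  refine (Set.eq_of_subset_of_ncard_le h ?_ (Set.toFinite _)).symm
  rwa [← Nat.card_coe_set_eq, ← Nat.card_coe_set_eq,
    SetLike.coe_sort_coe, SetLike.coe_sort_coe]

/-- The normalizer in `GL n (ZMod p)` of the subgroup generated by a Singer cycle `g`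
has cardinality `n * (p ^ n - 1)`; equivalently, the quotient of this normalizer by
`⟨g⟩` is a cyclic group of order `n`. -/
theorem singer_cycle_normalizer (p n : ℕ) (hp : p.Prime) (hn : 1 ≤ n)
    (g : GL (Fin n) (ZMod p)) (hg : orderOf g = p ^ n - 1) :
    Nat.card (Subgroup.normalizer (Subgroup.zpowers g : Set (GL (Fin n) (ZMod p)))) = n * (p ^ n - 1) ∧
    IsCyclic ((Subgroup.normalizer (Subgroup.zpowers g : Set (GL (Fin n) (ZMod p)))) ⧸
      (Subgroup.zpowers g).subgroupOf (Subgroup.normalizer (Subgroup.zpowers g : Set (GL (Fin n) (ZMod p))))) ∧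
    Nat.card ((Subgroup.normalizer (Subgroup.zpowers g : Set (GL (Fin n) (ZMod p)))) ⧸
      (Subgroup.zpowers g).subgroupOf (Subgroup.normalizer (Subgroup.zpowers g : Set (GL (Fin n) (ZMod p))))) = n := by
  classical
  haveI : Fact p.Prime := ⟨hp⟩
  haveI : NeZero n := ⟨by omega⟩
  have hp2 : 2 ≤ p := hp.two_le
  have hq1 : 1 ≤ p ^ n - 1 := by
    have : 2 ≤ p ^ n := le_trans hp2 (Nat.le_self_pow (by omega) p)
    omega
  haveI : NeZero (p ^ n - 1) := ⟨by omega⟩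
  set q1 := p ^ n - 1 with hq1def
  set H := Subgroup.zpowers g with hH
  set N := Subgroup.normalizer (H : Set (GL (Fin n) (ZMod p))) with hN
  -- zpow characterization
  have hzpow_iff : ∀ a b : ℤ, (g ^ a = g ^ b) ↔ ((a : ZMod q1) = (b : ZMod q1)) := by
    intro a b
    rw [zpow_eq_zpow_iff_modEq, hg, ZMod.intCast_eq_intCast_iff]
  -- every element of N conjugates g into a power
  have spec : ∀ x : N, ∃ m : ℤ, (x : GL (Fin n) (ZMod p)) * g * (x : GL (Fin n) (ZMod p))⁻¹
      = g ^ m := by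
    intro x
    have hx := Subgroup.mem_normalizer_iff.mp x.2
    have hmem : (x : GL (Fin n) (ZMod p)) * g * (x : GL (Fin n) (ZMod p))⁻¹ ∈ H :=
      (hx g).mp (Subgroup.mem_zpowers g)
    obtain ⟨k, hk⟩ := Subgroup.mem_zpowers_iff.mp hmem
    exact ⟨k, hk.symm⟩
  set e : N → ℤ := fun x => Classical.choose (spec x) with he
  have he_spec : ∀ x : N, (x : GL (Fin n) (ZMod p)) * g * (x : GL (Fin n) (ZMod p))⁻¹
      = g ^ (e x) := fun x => Classical.choose_spec (spec x)
  -- the character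
  set χ : N →* ZMod q1 :=
    { toFun := fun x => ((e x : ℤ) : ZMod q1)
      map_one' := by
        show ((e 1 : ℤ) : ZMod q1) = 1
        have h1 := he_spec 1
        simp only [Subgroup.coe_one, one_mul, inv_one, mul_one] at h1
        have : g ^ (1 : ℤ) = g ^ (e 1) := by rw [zpow_one]; exact h1
        rw [← (hzpow_iff 1 (e 1)).mp this]
        simp
      map_mul' := by
        intro x y
        have hx := he_spec x
        have hy := he_spec y
        have hxy := he_spec (x * y)
        have hconj : (↑(x * y) : GL (Fin n) (ZMod p)) * g * (↑(x * y))⁻¹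
            = g ^ (e x * e y) := by
          push_cast
          calc (↑x : GL (Fin n) (ZMod p)) * ↑y * g * (↑x * ↑y)⁻¹
              = ↑x * (↑y * g * (↑y)⁻¹) * (↑x)⁻¹ := by group
            _ = ↑x * g ^ (e y) * (↑x)⁻¹ := by rw [hy]
            _ = (↑x * g * (↑x)⁻¹) ^ (e y) := by rw [conj_zpow]
            _ = (g ^ (e x)) ^ (e y) := by rw [hx]
            _ = g ^ (e x * e y) := by rw [← _root_.zpow_mul, mul_comm]
        have h5 : g ^ (e (x * y)) = g ^ (e x * e y) := by rw [← hxy, hconj]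
        have h6 := (hzpow_iff _ _).mp h5
        show ((e (x * y) : ℤ) : ZMod q1) = ((e x : ℤ) : ZMod q1) * ((e y : ℤ) : ZMod q1)
        rw [h6]
        push_cast
        ring }
    with hχ
  set χ' : N →* (ZMod q1)ˣ := χ.toHomUnits with hχ'
  -- kernel of χ'
  have hker : χ'.ker = H.subgroupOf N := by
    ext x
    rw [MonoidHom.mem_ker]
    constructor
    · intro hx1
      have : χ x = 1 := by
        have := congrArg Units.val hx1
        rwa [MonoidHom.coe_toHomUnits] at this
      have hcast : ((e x : ℤ) : ZMod q1) = ((1 : ℤ) : ZMod q1) := by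
        rw [hχ] at this
        simpa using this
      have : g ^ (e x) = g ^ (1 : ℤ) := (hzpow_iff _ _).mpr hcast
      rw [zpow_one] at this
      have hcomm : (x : GL (Fin n) (ZMod p)) * g * (x : GL (Fin n) (ZMod p))⁻¹ = g := by
        rw [he_spec x, this]
      have hcomm' : Commute ((x : GL (Fin n) (ZMod p)) : Matrix (Fin n) (Fin n) (ZMod p))
          (g : Matrix (Fin n) (Fin n) (ZMod p)) := by
        have : (x : GL (Fin n) (ZMod p)) * g = g * (x : GL (Fin n) (ZMod p)) := by
          calc (x : GL (Fin n) (ZMod p)) * g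
              = ((x : GL (Fin n) (ZMod p)) * g * (x : GL (Fin n) (ZMod p))⁻¹) *
                (x : GL (Fin n) (ZMod p)) := by group
            _ = g * (x : GL (Fin n) (ZMod p)) := by rw [hcomm]
        have := congrArg Units.val this
        rw [Units.val_mul, Units.val_mul] at this
        exact this
      have hmem := singer_commute_mem p n hp hn g hg hcomm'
      rcases singer_mem_adjoin p n hp hn g hg hmem with h0 | ⟨i, hi⟩
      · exact absurd h0 (Units.ne_zero _)
      · have : (x : GL (Fin n) (ZMod p)) = g ^ i := Units.ext hi
        rw [Subgroup.mem_subgroupOf, hH]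
        rw [this]
        exact Subgroup.mem_zpowers_iff.mpr ⟨i, by rw [zpow_natCast]⟩
    · intro hx
      rw [Subgroup.mem_subgroupOf, hH, Subgroup.mem_zpowers_iff] at hx
      obtain ⟨k, hk⟩ := hx
      have hcomm : (x : GL (Fin n) (ZMod p)) * g * (x : GL (Fin n) (ZMod p))⁻¹ = g := by
        rw [← hk]
        group
      have : g ^ (e x) = g ^ (1 : ℤ) := by
        rw [← he_spec x, hcomm, zpow_one]
      have hc := (hzpow_iff _ _).mp this
      apply Units.ext
      rw [MonoidHom.coe_toHomUnits]
      rw [hχ]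
      simpa using hc
  -- Frobenius element and its membership in N
  obtain ⟨φ, hφ⟩ := singer_frobenius p n hp hn g hg
  have hφconj : ∀ k : ℤ, φ * g ^ k * φ⁻¹ = (g ^ (p : ℤ)) ^ k := by
    intro k
    rw [← conj_zpow, hφ, zpow_natCast]
  have hφconj' : φ⁻¹ * g * φ = g ^ ((p ^ (n - 1) : ℕ) : ℤ) := by
    have h1 : φ * g ^ ((p ^ (n - 1) : ℕ) : ℤ) * φ⁻¹ = g := by
      rw [hφconj, ← _root_.zpow_mul]
      have : (p : ℤ) * ((p ^ (n - 1) : ℕ) : ℤ) = ((p ^ n : ℕ) : ℤ) := by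
        push_cast
        rw [← pow_succ']
        congr 1
        omega
      rw [this, zpow_natCast]
      have hsplit : p ^ n = q1 + 1 := by omega
      rw [hsplit, pow_add, pow_one, ← hg, pow_orderOf_eq_one, one_mul]
    calc φ⁻¹ * g * φ = φ⁻¹ * (φ * g ^ ((p ^ (n - 1) : ℕ) : ℤ) * φ⁻¹) * φ := by rw [h1]
      _ = g ^ ((p ^ (n - 1) : ℕ) : ℤ) := by group
  have hφmem : φ ∈ N := by
    rw [hN, Subgroup.mem_normalizer_iff]
    intro h
    constructor
    · intro hh
      obtain ⟨k, hk⟩ := Subgroup.mem_zpowers_iff.mp hh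
      refine Subgroup.mem_zpowers_iff.mpr ⟨(p : ℤ) * k, ?_⟩
      rw [← hk, hφconj, ← _root_.zpow_mul]
    · intro hh
      obtain ⟨k, hk⟩ := Subgroup.mem_zpowers_iff.mp hh
      have hhh : h = φ⁻¹ * g ^ k * φ := by
        rw [hk]
        group
      rw [hhh]
      have h2 : φ⁻¹ * g ^ k * φ = (φ⁻¹ * g * φ) ^ k := by
        calc φ⁻¹ * g ^ k * φ = φ⁻¹ * g ^ k * (φ⁻¹)⁻¹ := by rw [inv_inv]
          _ = (φ⁻¹ * g * (φ⁻¹)⁻¹) ^ k := by rw [conj_zpow]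
          _ = (φ⁻¹ * g * φ) ^ k := by rw [inv_inv]
      rw [h2, hφconj', ← _root_.zpow_mul]
      exact Subgroup.mem_zpowers_iff.mpr ⟨_, rfl⟩
  set φN : N := ⟨φ, hφmem⟩ with hφN
  set pu : (ZMod q1)ˣ := χ' φN with hpu
  have hpuval : (pu : ZMod q1) = ((p : ℕ) : ZMod q1) := by
    have hspec := he_spec φN
    have hcoe : (φN : GL (Fin n) (ZMod p)) = φ := rfl
    rw [hcoe, hφ] at hspec
    have : g ^ ((p : ℕ) : ℤ) = g ^ (e φN) := by rw [zpow_natCast]; exact hspec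
    have hc := (hzpow_iff _ _).mp this
    rw [hpu, hχ']
    rw [MonoidHom.coe_toHomUnits]
    show ((e φN : ℤ) : ZMod q1) = _
    rw [← hc]
    push_cast
    ring
  -- order of pu is n
  have hpow_n : pu ^ n = 1 := by
    apply Units.ext
    rw [Units.val_pow_eq_pow_val, hpuval, Units.val_one, ← Nat.cast_pow]
    have hsplit : p ^ n = q1 + 1 := by omega
    rw [hsplit, Nat.cast_add, ZMod.natCast_self, zero_add, Nat.cast_one]
  have hpow_lt : ∀ j, 0 < j → j < n → pu ^ j ≠ 1 := by
    intro j hj0 hjn hcontra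
    have := congrArg Units.val hcontra
    rw [Units.val_pow_eq_pow_val, hpuval, Units.val_one, ← Nat.cast_pow, ← Nat.cast_one] at this
    have hmod : p ^ j ≡ 1 [MOD q1] := (ZMod.natCast_eq_natCast_iff _ _ _).mp this
    have hdvd : q1 ∣ p ^ j - 1 := (Nat.modEq_iff_dvd' (Nat.one_le_pow _ _ hp.pos)).mp hmod.symm
    have hlt : p ^ j - 1 < q1 := by
      have : p ^ j < p ^ n := Nat.pow_lt_pow_right (by omega) hjn
      omega
    have hpos : 0 < p ^ j - 1 := by
      have : 2 ≤ p ^ j := le_trans hp2 (Nat.le_self_pow (by omega) p)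
      omega
    have := Nat.le_of_dvd hpos hdvd
    omega
  have hord_pu : orderOf pu = n := by
    have hdvd : orderOf pu ∣ n := orderOf_dvd_of_pow_eq_one hpow_n
    have hne : orderOf pu ≠ 0 := by
      intro h0
      rw [h0] at hdvd
      omega
    have hle : orderOf pu ≤ n := Nat.le_of_dvd (by omega) hdvd
    rcases lt_or_eq_of_le hle with hlt | heq
    · exact absurd (pow_orderOf_eq_one pu) (hpow_lt _ (Nat.pos_of_ne_zero hne) hlt)
    · exact heq
  -- range of χ' contains zpowers pu
  have hle_range : Subgroup.zpowers pu ≤ χ'.range :=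
    Subgroup.zpowers_le.mpr ⟨φN, rfl⟩
  -- the subalgebra, again
  set A : Matrix (Fin n) (Fin n) (ZMod p) := (g : Matrix (Fin n) (Fin n) (ZMod p)) with hA
  set K := Algebra.adjoin (ZMod p) {A} with hK
  letI : CommRing K :=
    { (inferInstance : Ring K) with
      mul_comm := fun a b => Subtype.ext (by
        rw [MulMemClass.coe_mul, MulMemClass.coe_mul]
        exact (singer_adjoin_commute p n hp hn g hg a.2 b.2).eq) }
  haveI : Nontrivial K := ⟨⟨1, 0, fun h => by
    have := congrArg (Subtype.val) h
    rw [OneMemClass.coe_one, ZeroMemClass.coe_zero] at this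
    exact one_ne_zero this⟩⟩
  haveI : NoZeroDivisors K := by
    constructor
    intro a b hab
    rcases singer_mem_adjoin p n hp hn g hg a.2 with h0 | ⟨i, hi⟩
    · exact Or.inl (Subtype.ext (by rw [h0, ZeroMemClass.coe_zero]))
    · right
      have hval : (a : Matrix (Fin n) (Fin n) (ZMod p)) *
          (b : Matrix (Fin n) (Fin n) (ZMod p)) = 0 := by
        have := congrArg Subtype.val hab
        rwa [MulMemClass.coe_mul, ZeroMemClass.coe_zero] at this
      apply Subtype.ext
      rw [ZeroMemClass.coe_zero]
      have : ((g ^ i)⁻¹ : GL (Fin n) (ZMod p)).val *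
          ((a : Matrix (Fin n) (Fin n) (ZMod p)) *
            (b : Matrix (Fin n) (Fin n) (ZMod p))) = 0 := by
        rw [hval, mul_zero]
      rw [hi, ← mul_assoc, ← Units.val_mul, inv_mul_cancel, Units.val_one, one_mul] at this
      exact this
  haveI : IsDomain K := NoZeroDivisors.to_isDomain _
  set m : (ZMod p)[X] := minpoly (ZMod p) A with hm
  have hAint : IsIntegral (ZMod p) A := ⟨A.charpoly, A.charpoly_monic, A.aeval_self_charpoly⟩
  have hmon : m.Monic := minpoly.monic hAint
  have hdm : m.natDegree ≤ n := by
    have hdvd : m ∣ A.charpoly := minpoly.dvd (ZMod p) A A.aeval_self_charpoly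
    calc m.natDegree ≤ A.charpoly.natDegree :=
          Polynomial.natDegree_le_of_dvd hdvd (A.charpoly_monic.ne_zero)
      _ = n := by simp
  set gK : K := ⟨A, Algebra.self_mem_adjoin_singleton _ _⟩ with hgK
  have hord_gK : orderOf gK = q1 := by
    have h1 : orderOf ((Subalgebra.val K).toRingHom.toMonoidHom gK) = orderOf gK :=
      orderOf_injective _ (fun a b hab => Subtype.ext hab) gK
    have h2 : (Subalgebra.val K).toRingHom.toMonoidHom gK = A := rfl
    rw [h2] at h1
    rw [← h1, hA, orderOf_units, hg]
  set RS := ((m.map (algebraMap (ZMod p) K)).roots.toFinset) with hRS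
  have hRScard : RS.card ≤ n := by
    refine le_trans (Multiset.toFinset_card_le _) (le_trans (Polynomial.card_roots' _) ?_)
    rw [hmon.natDegree_map]
    exact hdm
  -- the injection from the range of χ' into the set of roots
  have hrootmem : ∀ u : χ'.range, gK ^ (((u : (ZMod q1)ˣ) : ZMod q1)).val ∈ RS := by
    rintro ⟨u, hu⟩
    obtain ⟨x, hx⟩ := hu
    simp only
    -- g ^ val = g ^ (e x)
    have hcast : (((u : ZMod q1)).val : ZMod q1) = ((e x : ℤ) : ZMod q1) := by
      rw [ZMod.natCast_val, ZMod.cast_id]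
      have : (u : ZMod q1) = χ x := by
        rw [← hx, hχ', MonoidHom.coe_toHomUnits]
      rw [this]
      rfl
    have hgu : g ^ ((((u : ZMod q1)).val : ℕ) : ℤ) = g ^ (e x) := by
      apply (hzpow_iff _ _).mpr
      push_cast at hcast ⊢
      exact hcast
    have hmat : A ^ (((u : ZMod q1)).val) =
        ((x : GL (Fin n) (ZMod p)) : Matrix (Fin n) (Fin n) (ZMod p)) * A *
          (((x : GL (Fin n) (ZMod p))⁻¹ : GL (Fin n) (ZMod p)) :
            Matrix (Fin n) (Fin n) (ZMod p)) := by
      have := he_spec x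
      rw [← this] at hgu
      rw [zpow_natCast] at hgu
      have hval := congrArg Units.val hgu
      rw [Units.val_pow_eq_pow_val] at hval
      rw [hval]
      rfl
    have haev : (Polynomial.aeval (A ^ (((u : ZMod q1)).val))) m = 0 := by
      rw [hmat]
      have : ((x : GL (Fin n) (ZMod p)) : Matrix (Fin n) (Fin n) (ZMod p)) * A *
          (((x : GL (Fin n) (ZMod p))⁻¹ : GL (Fin n) (ZMod p)) :
            Matrix (Fin n) (Fin n) (ZMod p)) = (singerConj p n (x : GL (Fin n) (ZMod p))) A :=
        rfl
      rw [this]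
      have h9 : (Polynomial.aeval ((singerConj p n (x : GL (Fin n) (ZMod p))).toAlgHom A)) m =
          (singerConj p n (x : GL (Fin n) (ZMod p))).toAlgHom ((Polynomial.aeval A) m) :=
        Polynomial.aeval_algHom_apply _ A m
      have h10 : ((singerConj p n (x : GL (Fin n) (ZMod p))).toAlgHom A) =
          (singerConj p n (x : GL (Fin n) (ZMod p))) A := rfl
      rw [← h10, h9, hm, minpoly.aeval, map_zero]
    have haevK : (Polynomial.aeval (gK ^ (((u : ZMod q1)).val))) m = 0 := by
      apply Subtype.ext
      rw [ZeroMemClass.coe_zero]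
      rw [Polynomial.aeval_subalgebra_coe]
      rw [SubmonoidClass.coe_pow]
      exact haev
    rw [hRS, Multiset.mem_toFinset, Polynomial.mem_roots']
    constructor
    · exact (hmon.map _).ne_zero
    · rw [Polynomial.IsRoot, Polynomial.eval_map_algebraMap]
      exact haevK
  have hinj : Function.Injective
      (fun u : χ'.range => (⟨gK ^ (((u : (ZMod q1)ˣ) : ZMod q1)).val, hrootmem u⟩ :
        {y // y ∈ RS})) := by
    intro u1 u2 h12
    have := congrArg Subtype.val h12
    simp only at this
    have hv : (((u1 : (ZMod q1)ˣ) : ZMod q1)).val = (((u2 : (ZMod q1)ˣ) : ZMod q1)).val := by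
      have hlt1 : (((u1 : (ZMod q1)ˣ) : ZMod q1)).val < orderOf gK := by
        rw [hord_gK]; exact ZMod.val_lt _
      have hlt2 : (((u2 : (ZMod q1)ˣ) : ZMod q1)).val < orderOf gK := by
        rw [hord_gK]; exact ZMod.val_lt _
      exact pow_injOn_Iio_orderOf hlt1 hlt2 this
    apply Subtype.ext
    apply Units.ext
    have := congrArg (fun t : ℕ => (t : ZMod q1)) hv
    simpa [ZMod.natCast_val, ZMod.cast_id] using this
  have hcard_range : Nat.card χ'.range ≤ n := by
    have := Nat.card_le_card_of_injective _ hinj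
    have hcard2 : Nat.card {y // y ∈ RS} = RS.card := by
      rw [Nat.card_eq_fintype_card, Fintype.card_coe]
    omega
  have hrange_eq : χ'.range = Subgroup.zpowers pu := by
    apply singer_subgroup_eq_of_le_of_card_le hle_range
    rw [Nat.card_zpowers, hord_pu]
    exact hcard_range
  -- assemble
  haveI : IsCyclic (Subgroup.zpowers pu) := by
    constructor
    refine ⟨⟨pu, Subgroup.mem_zpowers pu⟩, ?_⟩
    rintro ⟨x, hx⟩
    obtain ⟨k, hk⟩ := Subgroup.mem_zpowers_iff.mp hx
    exact Subgroup.mem_zpowers_iff.mpr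
      ⟨k, Subtype.ext (by rw [SubgroupClass.coe_zpow]; exact hk)⟩
  haveI : IsCyclic χ'.range := by rw [hrange_eq]; infer_instance
  have e0 : (N ⧸ H.subgroupOf N) ≃* (N ⧸ χ'.ker) :=
    QuotientGroup.quotientMulEquivOfEq hker.symm
  have e1 : (N ⧸ χ'.ker) ≃* χ'.range := QuotientGroup.quotientKerEquivRange χ'
  have E : (N ⧸ H.subgroupOf N) ≃* χ'.range := e0.trans e1
  have hcyc : IsCyclic (N ⧸ H.subgroupOf N) :=
    isCyclic_of_surjective E.symm.toMonoidHom E.symm.surjective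
  have hcardQ : Nat.card (N ⧸ H.subgroupOf N) = n := by
    rw [Nat.card_congr E.toEquiv, hrange_eq, Nat.card_zpowers, hord_pu]
  have hcardsub : Nat.card (H.subgroupOf N) = q1 := by
    rw [Nat.card_congr (Subgroup.subgroupOfEquivOfLe Subgroup.le_normalizer).toEquiv,
      Nat.card_zpowers, hg]
  have hcardN : Nat.card N = n * q1 := by
    rw [Subgroup.card_eq_card_quotient_mul_card_subgroup (H.subgroupOf N), hcardQ, hcardsub]
  exact ⟨hcardN, hcyc, hcardQ⟩
end

section
/- Let p be a prime and n, m ≥ 1. The kernel of the reduction-mod-p homomorphism GL_n(ZMod p^m) → GL_n(ZMod p) is a p-group; consequently GL_n(ZMod p^m)/O_p(GL_n(ZMod p^m)) ≅ GL_n(ZMod p), where O_p denotes the largest normal p-subgroup. -/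
open Matrix
open scoped MatrixGroups

/-- The `p`-core `O_p(G)`: the largest normal `p`-subgroup of `G`, here realized as the
join of all normal `p`-subgroups. -/
def pCore (p : ℕ) (G : Type*) [Group G] : Subgroup G :=
  sSup {H : Subgroup G | H.Normal ∧ IsPGroup p H}

/-- The sSup of a set of normal subgroups is normal. -/
lemma normal_sSup_aux {G : Type*} [Group G] (S : Set (Subgroup G))
    (h : ∀ H ∈ S, H.Normal) : (sSup S).Normal := by
  constructor
  intro x hx g
  rw [sSup_eq_iSup'] at hx ⊢
  refine Subgroup.iSup_induction (C := fun y => g * y * g⁻¹ ∈ ⨆ H : S, (H : Subgroup G))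
    _ hx ?_ ?_ ?_
  · intro H y hy
    exact Subgroup.mem_iSup_of_mem H ((h H H.2).conj_mem y hy g)
  · simpa using Subgroup.one_mem _
  · intro a b ha hb
    have : g * (a * b) * g⁻¹ = (g * a * g⁻¹) * (g * b * g⁻¹) := by group
    rw [this]
    exact Subgroup.mul_mem _ ha hb

lemma choose_pow_dvd_aux {p m k : ℕ} (hp : p.Prime) (hm : 1 ≤ m) (hk : 1 ≤ k) :
    p ^ m ∣ p ^ k * (p ^ (m - 1)).choose k := by
  rcases le_or_gt m k with h | h
  · exact dvd_mul_of_dvd_left (pow_dvd_pow p h) _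
  · have hkn : k ≤ p ^ (m - 1) :=
      le_trans (by omega) (Nat.le_of_lt (Nat.lt_pow_self (n := m - 1) hp.one_lt))
    set b := multiplicity p k with hbdef
    have hbdvd : p ^ b ∣ k := pow_multiplicity_dvd p k
    have hbk : b < k := lt_of_lt_of_le (Nat.lt_pow_self (n := b) hp.one_lt)
      (Nat.le_of_dvd (by omega) hbdvd)
    have hch : p ^ (m - 1 - b) ∣ (p ^ (m - 1)).choose k := by
      apply pow_dvd_of_le_emultiplicity
      rw [hp.emultiplicity_choose_prime_pow hkn (by omega)]
    calc p ^ m ∣ p ^ k * p ^ (m - 1 - b) := by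
          rw [← pow_add]; exact pow_dvd_pow p (by omega)
      _ ∣ p ^ k * (p ^ (m - 1)).choose k := mul_dvd_mul_left _ hch

/-- A matrix over `ZMod (p ^ m)` congruent to `1` mod `p` has `p`-power order dividing
`p ^ (m - 1)`. -/
lemma matrix_pow_eq_one_aux {p m n : ℕ} (hp : p.Prime) (hm : 1 ≤ m)
    (M : Matrix (Fin n) (Fin n) (ZMod (p ^ m)))
    (hM : ∀ i j, (ZMod.castHom (dvd_pow_self p (by omega : m ≠ 0)) (ZMod p)) (M i j)
      = (1 : Matrix (Fin n) (Fin n) (ZMod p)) i j) :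
    M ^ (p ^ (m - 1)) = 1 := by
  haveI : NeZero (p ^ m) := ⟨pow_ne_zero m hp.ne_zero⟩
  set h := ZMod.castHom (dvd_pow_self p (by omega : m ≠ 0)) (ZMod p) with hhdef
  -- every entry of M - 1 is divisible by p
  set N : Matrix (Fin n) (Fin n) (ZMod (p ^ m)) := M - 1 with hNdef
  have hdvd : ∀ i j, ∃ b : ZMod (p ^ m), N i j = (p : ZMod (p ^ m)) * b := by
    intro i j
    have h0 : h (N i j) = 0 := by
      rw [hNdef]
      simp only [Matrix.sub_apply, map_sub, hM i j]
      rcases eq_or_ne i j with rfl | hij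
      · simp [Matrix.one_apply_eq]
      · simp [Matrix.one_apply_ne hij]
    have : ((N i j).val : ZMod p) = 0 := by
      rw [hhdef, ZMod.castHom_apply, ← ZMod.natCast_val] at h0
      exact h0
    rw [ZMod.natCast_eq_zero_iff] at this
    obtain ⟨c, hc⟩ := this
    refine ⟨(c : ZMod (p ^ m)), ?_⟩
    have := (ZMod.natCast_rightInverse (n := p ^ m)) (N i j)
    calc N i j = (((N i j).val : ℕ) : ZMod (p ^ m)) := by
          rw [ZMod.natCast_val, ZMod.cast_id]
      _ = ((p * c : ℕ) : ZMod (p ^ m)) := by rw [← hc]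
      _ = (p : ZMod (p ^ m)) * (c : ZMod (p ^ m)) := by push_cast; ring
  choose B hB using fun i => (fun j => hdvd i j)
  have hMN : M = 1 + (p : ZMod (p ^ m)) • Matrix.of B := by
    ext i j
    have := hB i j
    rw [hNdef] at this
    simp only [Matrix.sub_apply] at this
    simp only [Matrix.add_apply, Matrix.smul_apply, Matrix.of_apply, smul_eq_mul]
    linear_combination this
  rw [hMN]
  set e := p ^ (m - 1) with hedef
  have he1 : 1 ≤ e := Nat.one_le_iff_ne_zero.mpr (pow_ne_zero _ hp.ne_zero)
  set C : Matrix (Fin n) (Fin n) (ZMod (p ^ m)) := Matrix.of B with hCdef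
  rw [(Commute.one_left ((p : ZMod (p ^ m)) • C)).add_pow e]
  rw [Finset.sum_range_succ]
  have hlast : (1 : Matrix (Fin n) (Fin n) (ZMod (p ^ m))) ^ e *
      ((p : ZMod (p ^ m)) • C) ^ (e - e) * (e.choose e : Matrix (Fin n) (Fin n) (ZMod (p ^ m)))
      = 1 := by
    simp
  rw [hlast]
  have hzero : ∀ k ∈ Finset.range e,
      (1 : Matrix (Fin n) (Fin n) (ZMod (p ^ m))) ^ k *
        ((p : ZMod (p ^ m)) • C) ^ (e - k) *
        (e.choose k : Matrix (Fin n) (Fin n) (ZMod (p ^ m))) = 0 := by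
    intro k hk
    rw [Finset.mem_range] at hk
    have hek : 1 ≤ e - k := by omega
    rw [one_pow, one_mul, smul_pow, smul_mul_assoc,
      ← (Nat.cast_commute (e.choose k) (C ^ (e - k))).eq,
      ← nsmul_eq_mul, ← Nat.cast_smul_eq_nsmul (ZMod (p ^ m)), smul_smul]
    have hz : ((p : ZMod (p ^ m)) ^ (e - k) * ((e.choose k : ℕ) : ZMod (p ^ m))) = 0 := by
      have h2 : (((p ^ (e - k) * e.choose k : ℕ)) : ZMod (p ^ m)) = 0 := by
        rw [ZMod.natCast_eq_zero_iff, ← Nat.choose_symm hk.le, hedef]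
        exact choose_pow_dvd_aux hp hm (by omega)
      push_cast at h2
      exact h2
    rw [hz, zero_smul]
  rw [Finset.sum_eq_zero hzero, zero_add]

/-- Every normal `p`-subgroup of `GL n (ZMod p)` is trivial. -/
lemma normal_pgroup_GL_eq_bot {p n : ℕ} (hp : p.Prime) (hn : 1 ≤ n)
    (N : Subgroup (GL (Fin n) (ZMod p))) (hNn : N.Normal) (hNp : IsPGroup p N) :
    N = ⊥ := by
  haveI : Fact p.Prime := ⟨hp⟩
  set K := ZMod p with hKdef
  set W : Set (Fin n → K) := {v | ∀ g ∈ N, (g : GL (Fin n) K).val *ᵥ v = v} with hWdef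
  have hW0 : (0 : Fin n → K) ∈ W := fun g _ => Matrix.mulVec_zero _
  have hWadd : ∀ v w : Fin n → K, v ∈ W → w ∈ W → v + w ∈ W := by
    intro v w hv hw g hg
    rw [Matrix.mulVec_add, hv g hg, hw g hg]
  have hWsmul : ∀ (c : K) (v : Fin n → K), v ∈ W → c • v ∈ W := by
    intro c v hv g hg
    rw [Matrix.mulVec_smul, hv g hg]
  have hWsub : ∀ v w : Fin n → K, v ∈ W → w ∈ W → w - v ∈ W := by
    intro v w hv hw
    have := hWadd w ((-1 : K) • v) hw (hWsmul _ _ hv)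
    simpa [sub_eq_add_neg, neg_one_smul] using this
  have hWconj : ∀ (g : GL (Fin n) K) (v : Fin n → K), v ∈ W → g.val *ᵥ v ∈ W := by
    intro g v hv u hu
    have hmem : g⁻¹ * u * g ∈ N := by
      have := hNn.conj_mem u hu g⁻¹
      simpa using this
    have hval : u.val * g.val = g.val * (g⁻¹ * u * g).val := by
      have hug : (u * g : GL (Fin n) K) = g * (g⁻¹ * u * g) := by group
      calc u.val * g.val = ((u * g : GL (Fin n) K)).val := (Units.val_mul _ _).symm
        _ = ((g * (g⁻¹ * u * g) : GL (Fin n) K)).val := by rw [hug]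
        _ = g.val * (g⁻¹ * u * g).val := Units.val_mul _ _
    rw [Matrix.mulVec_mulVec, hval, ← Matrix.mulVec_mulVec, hv _ hmem]
  -- invertible transvections
  have hT : ∀ (i j : Fin n), i ≠ j → ∀ c : K, ∃ g : GL (Fin n) K,
      g.val = Matrix.transvection i j c := by
    intro i j hij c
    have : IsUnit (Matrix.transvection i j c) := by
      rw [Matrix.isUnit_iff_isUnit_det, Matrix.det_transvection_of_ne i j hij]
      exact isUnit_one
    exact ⟨this.unit, this.unit_spec⟩
  -- a nonzero fixed vector
  obtain ⟨v, hvW, hv0⟩ : ∃ v, v ∈ W ∧ v ≠ 0 := by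
    letI : SMul ↥N (Fin n → K) := ⟨fun g v => (g : GL (Fin n) K).val *ᵥ v⟩
    letI : MulAction ↥N (Fin n → K) :=
      { one_smul := fun v => by
          show ((1 : ↥N) : GL (Fin n) K).val *ᵥ v = v
          simp
        mul_smul := fun g h v => by
          show ((g * h : ↥N) : GL (Fin n) K).val *ᵥ v = _
          show _ = (g : GL (Fin n) K).val *ᵥ ((h : GL (Fin n) K).val *ᵥ v)
          rw [Matrix.mulVec_mulVec]
          rfl }
    have hpcard : p ∣ Nat.card (Fin n → K) := by
      rw [Nat.card_fun, Nat.card_zmod, Nat.card_eq_fintype_card, Fintype.card_fin]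
      exact dvd_pow_self p (by omega)
    have h0fix : (0 : Fin n → K) ∈ MulAction.fixedPoints ↥N (Fin n → K) := by
      intro g
      exact Matrix.mulVec_zero _
    obtain ⟨b, hbfix, hb0⟩ :=
      hNp.exists_fixed_point_of_prime_dvd_card_of_fixed_point (Fin n → K) hpcard h0fix
    refine ⟨b, ?_, fun hb => hb0 hb.symm⟩
    intro g hg
    exact hbfix ⟨g, hg⟩
  obtain ⟨k, hk⟩ : ∃ k, v k ≠ 0 := Function.ne_iff.mp hv0
  -- all standard vectors with index ≠ k lie in W
  have hsingle1 : ∀ i, i ≠ k → ∀ x : K, Pi.single i x ∈ W := by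
    intro i hik x
    obtain ⟨g, hg⟩ := hT i k hik (x * (v k)⁻¹)
    have h2 : g.val *ᵥ v - v ∈ W := hWsub _ _ hvW (hWconj g v hvW)
    have heq : g.val *ᵥ v - v = Pi.single i x := by
      rw [hg, Matrix.transvection, Matrix.add_mulVec, Matrix.one_mulVec,
        Matrix.single_mulVec]
      funext j
      rcases eq_or_ne j i with rfl | hji
      · simp [mul_assoc, inv_mul_cancel₀ hk]
      · simp [Function.update_of_ne hji, Pi.single_eq_of_ne hji]
    rwa [heq] at h2
  have hsingle : ∀ (i : Fin n) (x : K), Pi.single i x ∈ W := by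
    intro i x
    rcases eq_or_ne i k with rfl | hik
    · by_cases hex : ∃ i' : Fin n, i' ≠ i
      · obtain ⟨i', hi'⟩ := hex
        have hu : Pi.single i' (1 : K) ∈ W := hsingle1 i' (by simpa using hi') 1
        obtain ⟨g, hg⟩ := hT i i' (Ne.symm hi') x
        have h2 : g.val *ᵥ Pi.single i' 1 - Pi.single i' 1 ∈ W :=
          hWsub _ _ hu (hWconj g _ hu)
        have heq : g.val *ᵥ Pi.single i' (1 : K) - Pi.single i' 1 = Pi.single i x := by
          rw [hg, Matrix.transvection, Matrix.add_mulVec, Matrix.one_mulVec,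
            Matrix.single_mulVec]
          funext j
          rcases eq_or_ne j i with rfl | hji
          · simp
          · simp [Function.update_of_ne hji, Pi.single_eq_of_ne hji]
        rwa [heq] at h2
      · push_neg at hex
        have heq : Pi.single i x = (x * (v i)⁻¹) • v := by
          funext j
          have hj : j = i := hex j
          subst hj
          simp [mul_assoc, inv_mul_cancel₀ hk]
        rw [heq]
        exact hWsmul _ _ hvW
    · exact hsingle1 i hik x
  have hall : ∀ w : Fin n → K, w ∈ W := by
    intro w
    have : ∑ i, Pi.single i (w i) ∈ W :=
      Finset.sum_induction _ (· ∈ W) hWadd hW0 (fun i _ => hsingle i (w i))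
    rwa [Finset.univ_sum_single] at this
  ext g
  simp only [Subgroup.mem_bot]
  constructor
  · intro hg
    have hval : g.val = (1 : Matrix (Fin n) (Fin n) K) := by
      ext i j
      have h1 : g.val *ᵥ Pi.single j 1 = Pi.single j 1 := hall _ g hg
      have h2 := congrFun h1 i
      simp only [Matrix.mulVec_single_one, Matrix.col_apply] at h2
      rw [h2, Matrix.one_apply, Pi.single_apply]
    exact Units.ext (by rw [hval, Units.val_one])
  · rintro rfl
    exact N.one_mem

/-- The reduction map on `GL` is surjective. -/
lemma GL_map_surjective_aux {p n m : ℕ} (hp : p.Prime) (hm : 1 ≤ m) :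
    Function.Surjective
      (Matrix.GeneralLinearGroup.map
        (ZMod.castHom (dvd_pow_self p (by omega : m ≠ 0)) (ZMod p)) :
          GL (Fin n) (ZMod (p ^ m)) →* GL (Fin n) (ZMod p)) := by
  haveI : NeZero (p ^ m) := ⟨pow_ne_zero m hp.ne_zero⟩
  haveI : Fact p.Prime := ⟨hp⟩
  set h := ZMod.castHom (dvd_pow_self p (by omega : m ≠ 0)) (ZMod p) with hhdef
  intro A
  set M : Matrix (Fin n) (Fin n) (ZMod (p ^ m)) :=
    Matrix.of fun i j => (((A.val i j).val : ℕ) : ZMod (p ^ m)) with hMdef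
  have hmap : M.map h = A.val := by
    ext i j
    simp only [Matrix.map_apply, hMdef, Matrix.of_apply, map_natCast]
    rw [ZMod.natCast_val, ZMod.cast_id]
  have hdetu : IsUnit (h M.det) := by
    rw [RingHom.map_det, RingHom.mapMatrix_apply, hmap]
    exact (Matrix.isUnit_iff_isUnit_det A.val).mp A.isUnit
  have hdet : IsUnit M.det := by
    have h1 : h M.det = ((M.det.val : ℕ) : ZMod p) := by
      rw [hhdef, ZMod.castHom_apply, ZMod.natCast_val]
    rw [h1, ZMod.isUnit_iff_coprime] at hdetu
    have : (M.det.val).Coprime (p ^ m) := Nat.Coprime.pow_right m hdetu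
    have := (ZMod.isUnit_iff_coprime M.det.val (p ^ m)).mpr this
    rwa [ZMod.natCast_val, ZMod.cast_id] at this
  set u : GL (Fin n) (ZMod (p ^ m)) := ((Matrix.isUnit_iff_isUnit_det M).mpr hdet).unit
    with hudef
  refine ⟨u, ?_⟩
  apply Units.ext
  show (u.val).map h = A.val
  rw [hudef, IsUnit.unit_spec, hmap]

/-- The kernel of the reduction-mod-`p` homomorphism `GL n (ZMod (p ^ m)) → GL n (ZMod p)`
is a `p`-group; consequently `GL n (ZMod (p ^ m)) / O_p(GL n (ZMod (p ^ m)))` is isomorphic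
to `GL n (ZMod p)`. -/
theorem reduction_kernel_pGroup (p n m : ℕ) (hp : p.Prime) (hn : 1 ≤ n) (hm : 1 ≤ m) :
    IsPGroup p
      (Matrix.GeneralLinearGroup.map
        (ZMod.castHom (dvd_pow_self p (by omega : m ≠ 0)) (ZMod p)) :
          GL (Fin n) (ZMod (p ^ m)) →* GL (Fin n) (ZMod p)).ker ∧
    ∃ hN : (pCore p (GL (Fin n) (ZMod (p ^ m)))).Normal,
      letI := hN
      Nonempty ((GL (Fin n) (ZMod (p ^ m)) ⧸ pCore p (GL (Fin n) (ZMod (p ^ m)))) ≃*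
        GL (Fin n) (ZMod p)) := by
  set f : GL (Fin n) (ZMod (p ^ m)) →* GL (Fin n) (ZMod p) :=
    (Matrix.GeneralLinearGroup.map
      (ZMod.castHom (dvd_pow_self p (by omega : m ≠ 0)) (ZMod p))) with hfdef
  have hker : IsPGroup p f.ker := by
    intro g
    refine ⟨m - 1, ?_⟩
    obtain ⟨x, hx⟩ := g
    rw [MonoidHom.mem_ker] at hx
    have hxmap : (x.val).map (ZMod.castHom (dvd_pow_self p (by omega : m ≠ 0)) (ZMod p))
        = 1 := by
      have := congrArg Units.val hx
      simpa [hfdef, Matrix.GeneralLinearGroup.map, RingHom.mapMatrix_apply] using this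
    have hM : ∀ i j, (ZMod.castHom (dvd_pow_self p (by omega : m ≠ 0)) (ZMod p)) (x.val i j)
        = (1 : Matrix (Fin n) (Fin n) (ZMod p)) i j := by
      intro i j
      have := congrFun (congrFun hxmap i) j
      simpa [Matrix.map_apply] using this
    have hpow : x ^ (p ^ (m - 1)) = 1 := by
      apply Units.ext
      rw [Units.val_pow_eq_pow_val, Units.val_one]
      exact matrix_pow_eq_one_aux hp hm x.val hM
    apply Subtype.ext
    rw [SubmonoidClass.coe_pow, OneMemClass.coe_one]
    exact hpow
  have hsurj : Function.Surjective f := GL_map_surjective_aux hp hm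
  refine ⟨hker, ?_⟩
  have hcoreN : (pCore p (GL (Fin n) (ZMod (p ^ m)))).Normal := by
    apply normal_sSup_aux
    intro H hH
    exact hH.1
  refine ⟨hcoreN, ?_⟩
  have hEq : pCore p (GL (Fin n) (ZMod (p ^ m))) = f.ker := by
    apply le_antisymm
    · apply sSup_le
      rintro H ⟨hHn, hHp⟩ x hxH
      have hmapbot : H.map f = ⊥ :=
        normal_pgroup_GL_eq_bot hp hn (H.map f) (hHn.map f hsurj) (hHp.map f)
      have : f x ∈ H.map f := Subgroup.mem_map_of_mem f hxH
      rw [hmapbot, Subgroup.mem_bot] at this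
      rwa [MonoidHom.mem_ker]
    · exact le_sSup ⟨MonoidHom.normal_ker f, hker⟩
  exact ⟨(QuotientGroup.quotientMulEquivOfEq hEq).trans
    (QuotientGroup.quotientKerEquivOfSurjective f hsurj)⟩
end

section
/- Let p be a prime, n, m ≥ 1, and let g ∈ GL_n(ZMod p^m) have order p^n − 1. Then the cyclic group generated by g acts freely on the nonzero elements of Q = (ZMod p^m)^n: for every integer k and every nonzero v ∈ (ZMod p^m)^n, if g^k • v = v then (p^n − 1) divides k (equivalently g^k = 1). -/
open Matrix Polynomial
open scoped MatrixGroups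


lemma aux_pow_prime_expand {S : Type*} [Ring S] {p : ℕ} (hp : 2 ≤ p) (x : S) :
    ∃ c : S, (1 + x) ^ p = 1 + (p : S) * x + x ^ 2 * c := by
  refine ⟨∑ i ∈ Finset.range (p - 1), x ^ (p - 2 - i) * (p.choose i : S), ?_⟩
  rw [(Commute.one_left x).add_pow]
  have h1 : p + 1 = (p - 1) + 1 + 1 := by omega
  rw [h1, Finset.sum_range_succ, Finset.sum_range_succ]
  have h2 : p - 1 + 1 = p := by omega
  have h3 : p - (p - 1) = 1 := by omega
  have h4 : p.choose (p - 1) = p := by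
    rw [← Nat.choose_symm (by omega : p - 1 ≤ p), h3, Nat.choose_one_right]
  have hsum : ∑ i ∈ Finset.range (p - 1), 1 ^ i * x ^ (p - i) * (p.choose i : S)
      = x ^ 2 * ∑ i ∈ Finset.range (p - 1), x ^ (p - 2 - i) * (p.choose i : S) := by
    rw [Finset.mul_sum]
    refine Finset.sum_congr rfl fun i hi => ?_
    rw [Finset.mem_range] at hi
    rw [one_pow, one_mul, ← mul_assoc, ← pow_add]
    congr 2
    omega
  rw [h2, hsum, h3, h4, Nat.sub_self, Nat.choose_self]
  simp only [one_pow, one_mul, pow_zero, pow_one, Nat.cast_one, mul_one]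
  rw [(Nat.cast_commute p x).eq]
  abel

lemma aux_one_add_pow {S : Type*} [Ring S] {p : ℕ} (hp : 2 ≤ p) (B : S) (j : ℕ) :
    ∃ C : S, (1 + (p : S) * B) ^ (p ^ j) = 1 + (p : S) ^ (j + 1) * C := by
  induction j with
  | zero => exact ⟨B, by simp⟩
  | succ j ih =>
    obtain ⟨C, hC⟩ := ih
    obtain ⟨c, hc⟩ := aux_pow_prime_expand hp ((p : S) ^ (j + 1) * C)
    refine ⟨C + (p : S) ^ j * (C ^ 2 * c), ?_⟩
    have hcomm : Commute ((p : S) ^ (j + 1)) C :=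
      ((Nat.cast_commute p C).pow_left (j + 1))
    have hkey : (p : S) ^ (j + 2) * ((p : S) ^ j * (C ^ 2 * c))
        = (p : S) ^ (2 * j + 2) * C ^ 2 * c := by
      rw [← mul_assoc, ← pow_add, show j + 2 + j = 2 * j + 2 from by ring, mul_assoc]
    calc (1 + (p : S) * B) ^ (p ^ (j + 1))
        = ((1 + (p : S) * B) ^ (p ^ j)) ^ p := by rw [← pow_mul, pow_succ]
      _ = (1 + (p : S) ^ (j + 1) * C) ^ p := by rw [hC]
      _ = 1 + (p : S) * ((p : S) ^ (j + 1) * C) + ((p : S) ^ (j + 1) * C) ^ 2 * c := hc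
      _ = 1 + (p : S) ^ (j + 2) * C + (p : S) ^ (2 * j + 2) * C ^ 2 * c := by
          rw [← mul_assoc, ← pow_succ', hcomm.mul_pow, ← pow_mul,
            show (j + 1) * 2 = 2 * j + 2 from by ring]
      _ = 1 + (p : S) ^ (j + 2) * (C + (p : S) ^ j * (C ^ 2 * c)) := by
          rw [mul_add, hkey, add_assoc]

lemma aux_exists_mul {p m : ℕ} (hp : p.Prime) (hm : 1 ≤ m) (x : ZMod (p ^ m))
    (hx : ZMod.castHom (dvd_pow_self p (by omega : m ≠ 0)) (ZMod p) x = 0) :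
    ∃ y : ZMod (p ^ m), x = (p : ZMod (p ^ m)) * y := by
  haveI : NeZero (p ^ m) := ⟨pow_ne_zero m hp.pos.ne'⟩
  obtain ⟨z, rfl⟩ : ∃ z : ℤ, (z : ZMod (p ^ m)) = x := ⟨(ZMod.cast x : ℤ), ZMod.intCast_rightInverse x⟩
  rw [map_intCast, ZMod.intCast_zmod_eq_zero_iff_dvd] at hx
  obtain ⟨w, rfl⟩ := hx
  exact ⟨(w : ZMod (p ^ m)), by push_cast; ring⟩

lemma aux_cast_zero {p m e : ℕ} (hp : p.Prime) (he : e < m) (x : ZMod (p ^ m))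
    (hx : (p : ZMod (p ^ m)) ^ e * x = 0) :
    ZMod.castHom (dvd_pow_self p (by omega : m ≠ 0)) (ZMod p) x = 0 := by
  haveI : NeZero (p ^ m) := ⟨pow_ne_zero m hp.pos.ne'⟩
  obtain ⟨z, rfl⟩ : ∃ z : ℤ, (z : ZMod (p ^ m)) = x := ⟨(ZMod.cast x : ℤ), ZMod.intCast_rightInverse x⟩
  have h1 : (((p : ℤ) ^ e * z : ℤ) : ZMod (p ^ m)) = 0 := by push_cast; exact hx
  rw [ZMod.intCast_zmod_eq_zero_iff_dvd] at h1
  have h2 : (p : ℤ) ^ e * (p : ℤ) ^ (m - e) ∣ (p : ℤ) ^ e * z := by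
    rw [← pow_add, show e + (m - e) = m from by omega]
    exact_mod_cast h1
  have h3 : (p : ℤ) ^ (m - e) ∣ z :=
    (mul_dvd_mul_iff_left (pow_ne_zero e (by exact_mod_cast hp.pos.ne' : (p:ℤ) ≠ 0))).mp h2
  have h4 : (p : ℤ) ∣ z := (dvd_pow_self (p : ℤ) (by omega : m - e ≠ 0)).trans h3
  obtain ⟨w, rfl⟩ := h4
  rw [map_intCast, Int.cast_mul, Int.cast_natCast, ZMod.natCast_self, zero_mul]

lemma aux_ker_pow (p n m : ℕ) (hp : p.Prime) (hm : 1 ≤ m)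
    (u : GL (Fin n) (ZMod (p ^ m)))
    (hu : (u : Matrix (Fin n) (Fin n) (ZMod (p ^ m))).map
        (ZMod.castHom (dvd_pow_self p (by omega : m ≠ 0)) (ZMod p)) = 1) :
    u ^ (p ^ (m - 1)) = 1 := by
  set f := ZMod.castHom (dvd_pow_self p (by omega : m ≠ 0)) (ZMod p) with hf
  set A : Matrix (Fin n) (Fin n) (ZMod (p ^ m)) := (u : Matrix (Fin n) (Fin n) (ZMod (p ^ m)))
  have hentry : ∀ i j, ∃ y : ZMod (p ^ m),
      A i j - (1 : Matrix (Fin n) (Fin n) (ZMod (p ^ m))) i j = (p : ZMod (p ^ m)) * y := by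
    intro i j
    apply aux_exists_mul hp hm
    have h1 : f (A i j) = (1 : Matrix (Fin n) (Fin n) (ZMod p)) i j := by
      rw [← hu]; rfl
    rw [map_sub, h1]
    rcases eq_or_ne i j with h | h
    · subst h
      rw [Matrix.one_apply_eq, Matrix.one_apply_eq, _root_.map_one, sub_self]
    · rw [Matrix.one_apply_ne h, Matrix.one_apply_ne h, map_zero, sub_zero]
  choose B hB using hentry
  set B' : Matrix (Fin n) (Fin n) (ZMod (p ^ m)) := Matrix.of B with hB'
  have hA : A = 1 + (p : Matrix (Fin n) (Fin n) (ZMod (p ^ m))) * B' := by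
    have hcast : (p : Matrix (Fin n) (Fin n) (ZMod (p ^ m)))
        = Matrix.diagonal (fun _ => (p : ZMod (p ^ m))) := by
      rw [← map_natCast (Matrix.scalar (Fin n)) p, Matrix.scalar_apply]
    ext i j
    have h2 := hB i j
    rw [Matrix.add_apply, hcast, Matrix.diagonal_mul]
    rw [show B' i j = B i j from rfl]
    linear_combination h2
  obtain ⟨C, hC⟩ :=
    aux_one_add_pow (S := Matrix (Fin n) (Fin n) (ZMod (p ^ m))) hp.two_le B' (m - 1)
  have hpm : (p : Matrix (Fin n) (Fin n) (ZMod (p ^ m))) ^ (m - 1 + 1) = 0 := by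
    rw [show m - 1 + 1 = m from by omega, ← Nat.cast_pow,
      ← map_natCast (Matrix.scalar (Fin n)) (p ^ m), ZMod.natCast_self, map_zero]
  have h2 : A ^ (p ^ (m - 1)) = 1 := by
    rw [hA, hC, hpm, zero_mul, add_zero]
  ext i j
  calc (↑(u ^ (p ^ (m - 1))) : Matrix (Fin n) (Fin n) (ZMod (p ^ m))) i j
      = (A ^ (p ^ (m - 1))) i j := by rw [Units.val_pow_eq_pow_val]
    _ = (1 : Matrix (Fin n) (Fin n) (ZMod (p ^ m))) i j := by rw [h2]

lemma aux_singer_field (p n : ℕ) (hp : p.Prime) (hn : 1 ≤ n)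
    (h : GL (Fin n) (ZMod p)) (hh : orderOf h = p ^ n - 1) (k : ℤ)
    (w : Fin n → ZMod p) (hw : w ≠ 0)
    (hfix : ((h ^ k : GL (Fin n) (ZMod p)) : Matrix (Fin n) (Fin n) (ZMod p)).mulVec w = w) :
    ((p ^ n - 1 : ℕ) : ℤ) ∣ k := by
  haveI : Fact p.Prime := ⟨hp⟩
  haveI : Nonempty (Fin n) := Fin.pos_iff_nonempty.mp (by omega)
  set N : ℕ := p ^ n - 1 with hN
  have hp2 : 2 ≤ p := hp.two_le
  have hNpos : 0 < N := by
    have : 2 ≤ p ^ n := le_trans hp2 (Nat.le_self_pow (by omega) p)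
    omega
  -- reduce the integer power to a natural power
  set r : ℕ := (k % (N : ℤ)).toNat with hr
  have hrk : h ^ k = h ^ r := by
    have hord : h ^ (N : ℤ) = 1 := by
      rw [zpow_natCast, ← hh]
      exact pow_orderOf_eq_one h
    have hsplit : k = (N : ℤ) * (k / (N : ℤ)) + k % (N : ℤ) := (Int.mul_ediv_add_emod k N).symm
    rw [show h ^ k = h ^ ((N : ℤ) * (k / (N : ℤ)) + k % (N : ℤ)) from by rw [← hsplit]]
    rw [_root_.zpow_add, _root_.zpow_mul, hord, _root_.one_zpow, one_mul, ← zpow_natCast]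
    congr 1
    rw [hr, Int.toNat_of_nonneg (Int.emod_nonneg k (by exact_mod_cast hNpos.ne' : (N:ℤ) ≠ 0))]
  set H : Matrix (Fin n) (Fin n) (ZMod p) := (h : Matrix (Fin n) (Fin n) (ZMod p)) with hH
  set A : Subalgebra (ZMod p) (Matrix (Fin n) (Fin n) (ZMod p)) :=
    Algebra.adjoin (ZMod p) {H} with hA
  have hHA : H ∈ A := Algebra.self_mem_adjoin_singleton _ _
  have hHN : H ^ N = 1 := by
    rw [← Units.val_pow_eq_pow_val, ← hh, pow_orderOf_eq_one, Units.val_one]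
  -- the subalgebra is finite
  haveI : Finite A := Subtype.finite
  -- cardinality bound via polynomials of degree < n
  haveI : Finite (Polynomial.degreeLT (ZMod p) n) :=
    Finite.of_equiv _ (Polynomial.degreeLTEquiv (ZMod p) n).toEquiv.symm
  have hcard : Nat.card A ≤ p ^ n := by
    have hsurj : Function.Surjective (fun q : Polynomial.degreeLT (ZMod p) n =>
        (⟨Polynomial.aeval H q.1, by
          rw [hA, Algebra.adjoin_singleton_eq_range_aeval]
          exact ⟨q.1, rfl⟩⟩ : A)) := by
      rintro ⟨b, hb⟩
      rw [hA, Algebra.adjoin_singleton_eq_range_aeval] at hb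
      obtain ⟨q, hq⟩ := hb
      refine ⟨⟨q %ₘ H.charpoly, ?_⟩, ?_⟩
      · rw [Polynomial.mem_degreeLT]
        have := Polynomial.degree_modByMonic_lt q H.charpoly_monic
        rwa [H.charpoly_degree_eq_dim, Fintype.card_fin] at this
      · apply Subtype.ext
        show Polynomial.aeval H (q %ₘ H.charpoly) = b
        conv_rhs => rw [← hq]
        show _ = Polynomial.aeval H q
        conv_rhs => rw [← Polynomial.modByMonic_add_div q H.charpoly]
        rw [map_add, _root_.map_mul, Matrix.aeval_self_charpoly, zero_mul, add_zero]
    have h1 : Nat.card A ≤ Nat.card (Polynomial.degreeLT (ZMod p) n) :=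
      Nat.card_le_card_of_surjective _ hsurj
    have h2 : Nat.card (Polynomial.degreeLT (ZMod p) n) = p ^ n := by
      rw [Nat.card_congr (Polynomial.degreeLTEquiv (ZMod p) n).toEquiv]
      simp [Nat.card_fun, Nat.card_eq_fintype_card, ZMod.card]
    omega
  -- the unit generated by H in A
  have hA1 : ((1 : A) : Matrix (Fin n) (Fin n) (ZMod p)) = 1 := rfl
  have haN : (⟨H, hHA⟩ : A) ^ N = 1 := by
    apply Subtype.ext
    show H ^ N = 1
    exact hHN
  set ua : Aˣ := {
    val := ⟨H, hHA⟩
    inv := (⟨H, hHA⟩ : A) ^ (N - 1)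
    val_inv := by rw [← pow_succ', show N - 1 + 1 = N from by omega, haN]
    inv_val := by rw [← pow_succ, show N - 1 + 1 = N from by omega, haN] } with hua
  have horda : orderOf ua = N := by
    rw [← orderOf_units]
    show orderOf (⟨H, hHA⟩ : A) = N
    have hinj : Function.Injective (A.val.toRingHom.toMonoidHom) := Subtype.val_injective
    rw [← orderOf_injective _ hinj]
    show orderOf H = N
    rw [← hh, orderOf_units]
  -- counting: N ≤ |Aˣ| ≤ |A \ {0}| = |A| - 1 ≤ p^n - 1 = N
  haveI : Nontrivial A := ⟨⟨1, 0, fun hcon => by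
    have : (1 : Matrix (Fin n) (Fin n) (ZMod p)) = 0 := congrArg Subtype.val hcon
    exact one_ne_zero this⟩⟩
  have hNle : N ≤ Nat.card Aˣ :=
    Nat.le_of_dvd Nat.card_pos (horda ▸ orderOf_dvd_natCard ua)
  set ι : Aˣ → {b : A // b ≠ 0} := fun u => ⟨(u : A), Units.ne_zero u⟩ with hι
  have hιinj : Function.Injective ι := fun u1 u2 hcon =>
    Units.ext (congrArg Subtype.val hcon)
  haveI : Fintype A := Fintype.ofFinite A
  have hcard2 : Nat.card {b : A // b ≠ 0} = Nat.card A - 1 := by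
    rw [Nat.card_eq_fintype_card, Nat.card_eq_fintype_card]
    rw [Fintype.card_subtype_compl (p := fun b : A => b = 0), Fintype.card_subtype_eq]
  have hchain : Nat.card Aˣ = Nat.card {b : A // b ≠ 0} := by
    have hle : Nat.card Aˣ ≤ Nat.card {b : A // b ≠ 0} := Nat.card_le_card_of_injective ι hιinj
    omega
  have hιsurj : Function.Surjective ι :=
    (hιinj.bijective_of_nat_card_le (by omega)).surjective
  -- the main argument: H ^ r - 1 kills w, hence must be 0
  have hfixr : (H ^ r).mulVec w = w := by
    rw [hrk, Units.val_pow_eq_pow_val] at hfix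
    exact hfix
  have hbmem : H ^ r - 1 ∈ A := A.sub_mem (A.pow_mem hHA r) A.one_mem
  have hsub : (H ^ r - 1).mulVec w = 0 := by
    rw [Matrix.sub_mulVec, hfixr, Matrix.one_mulVec, sub_self]
  have hb0 : (⟨H ^ r - 1, hbmem⟩ : A) = 0 := by
    by_contra hb
    obtain ⟨u, hu⟩ := hιsurj ⟨⟨H ^ r - 1, hbmem⟩, hb⟩
    have hu' : ((u : A) : Matrix (Fin n) (Fin n) (ZMod p)) = H ^ r - 1 := by
      have := congrArg Subtype.val hu
      exact congrArg Subtype.val this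
    have hinvA : ((u⁻¹ : Aˣ) : A) * (u : A) = 1 := u.inv_mul
    have hinv : (((u⁻¹ : Aˣ) : A) : Matrix (Fin n) (Fin n) (ZMod p)) * (H ^ r - 1) = 1 := by
      have := congrArg (Subtype.val : A → Matrix (Fin n) (Fin n) (ZMod p)) hinvA
      rwa [Subalgebra.coe_mul, Subalgebra.coe_one, hu'] at this
    have hw0 : w = 0 := by
      calc w = (1 : Matrix (Fin n) (Fin n) (ZMod p)).mulVec w := (Matrix.one_mulVec w).symm
        _ = ((((u⁻¹ : Aˣ) : A) : Matrix (Fin n) (Fin n) (ZMod p)) * (H ^ r - 1)).mulVec w := by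
            rw [hinv]
        _ = (((u⁻¹ : Aˣ) : A) : Matrix (Fin n) (Fin n) (ZMod p)).mulVec
            ((H ^ r - 1).mulVec w) := by rw [Matrix.mulVec_mulVec]
        _ = 0 := by rw [hsub, Matrix.mulVec_zero]
    exact hw hw0
  have hHr : H ^ r = 1 := by
    have := congrArg Subtype.val hb0
    have h6 : H ^ r - 1 = 0 := this
    rwa [sub_eq_zero] at h6
  have hhk : h ^ k = 1 := by
    rw [hrk]
    ext1
    rw [Units.val_pow_eq_pow_val, Units.val_one]
    exact hHr
  rw [← hh]
  exact orderOf_dvd_iff_zpow_eq_one.mpr hhk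

/-- A Singer cycle `g` in `GL n (ZMod (p ^ m))` generates a cyclic group acting freely on
the nonzero elements of `Q = (ZMod (p ^ m)) ^ n`: if `g ^ k` fixes a nonzero element then
`p ^ n - 1 ∣ k`, i.e. `g ^ k = 1`. -/
theorem singer_cycle_free_homocyclic (p n m : ℕ) (hp : p.Prime) (hn : 1 ≤ n) (hm : 1 ≤ m)
    (g : GL (Fin n) (ZMod (p ^ m))) (hg : orderOf g = p ^ n - 1)
    (k : ℤ) (v : Fin n → ZMod (p ^ m)) (hv : v ≠ 0)
    (hfix : ((g ^ k : GL (Fin n) (ZMod (p ^ m))) :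
        Matrix (Fin n) (Fin n) (ZMod (p ^ m))).mulVec v = v) :
    ((p ^ n - 1 : ℕ) : ℤ) ∣ k := by
  have hp2 : 2 ≤ p := hp.two_le
  set f : ZMod (p ^ m) →+* ZMod p :=
    ZMod.castHom (dvd_pow_self p (by omega : m ≠ 0)) (ZMod p) with hfdef
  set Φ : GL (Fin n) (ZMod (p ^ m)) →* GL (Fin n) (ZMod p) :=
    Units.map (RingHom.mapMatrix f : Matrix (Fin n) (Fin n) (ZMod (p ^ m)) →+* Matrix (Fin n) (Fin n) (ZMod p)).toMonoidHom
    with hΦ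
  have hΦcoe : ∀ u : GL (Fin n) (ZMod (p ^ m)),
      ((Φ u : GL (Fin n) (ZMod p)) : Matrix (Fin n) (Fin n) (ZMod p))
        = (u : Matrix (Fin n) (Fin n) (ZMod (p ^ m))).map f := by
    intro u; rfl
  set N : ℕ := p ^ n - 1 with hN
  have hNpos : 0 < N := by
    have : 2 ≤ p ^ n := le_trans hp2 (Nat.le_self_pow (by omega) p)
    omega
  -- order of the reduction
  have hcop : Nat.Coprime N p := by
    have hnd : ¬ p ∣ N := by
      intro hd
      have h1 : p ∣ p ^ n := dvd_pow_self p (by omega)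
      have h2 := Nat.dvd_sub h1 hd
      rw [show p ^ n - N = 1 from by omega] at h2
      exact absurd (Nat.le_of_dvd one_pos h2) (by omega)
    exact Nat.coprime_comm.mp (hp.coprime_iff_not_dvd.mpr hnd)
  have hordF : orderOf (Φ g) = N := by
    have hd1 : orderOf (Φ g) ∣ N := hg ▸ orderOf_map_dvd Φ g
    have hker : (g ^ orderOf (Φ g)) ^ (p ^ (m - 1)) = 1 := by
      apply aux_ker_pow p n m hp hm
      have : Φ (g ^ orderOf (Φ g)) = 1 := by
        rw [map_pow, pow_orderOf_eq_one]
      calc ((g ^ orderOf (Φ g) : GL (Fin n) (ZMod (p ^ m))) : Matrix (Fin n) (Fin n) (ZMod (p ^ m))).map f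
          = ((Φ (g ^ orderOf (Φ g)) : GL (Fin n) (ZMod p)) : Matrix (Fin n) (Fin n) (ZMod p)) :=
            (hΦcoe _).symm
        _ = 1 := by rw [this]; rfl
    have hdvd : N ∣ orderOf (Φ g) * p ^ (m - 1) := by
      rw [← hg]
      exact orderOf_dvd_of_pow_eq_one (by rwa [← pow_mul] at hker)
    have := (Nat.Coprime.dvd_of_dvd_mul_right (hcop.pow_right (m - 1)) hdvd)
    exact Nat.dvd_antisymm hd1 this
  -- find the right exponent e and vector w
  have hpowm : (p : ZMod (p ^ m)) ^ m = 0 := by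
    rw [← Nat.cast_pow, ZMod.natCast_self]
  obtain ⟨e, hem, ⟨w, hw⟩, hnot⟩ :
      ∃ e, e < m ∧ (∃ w : Fin n → ZMod (p ^ m), v = (p : ZMod (p ^ m)) ^ e • w) ∧
        ¬ (∃ w : Fin n → ZMod (p ^ m), v = (p : ZMod (p ^ m)) ^ (e + 1) • w) := by
    classical
    have hspec : (fun e => ∃ w : Fin n → ZMod (p ^ m), v = (p : ZMod (p ^ m)) ^ e • w)
        (Nat.findGreatest (fun e => ∃ w : Fin n → ZMod (p ^ m), v = (p : ZMod (p ^ m)) ^ e • w) m) :=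
      Nat.findGreatest_spec (P := fun e => ∃ w : Fin n → ZMod (p ^ m), v = (p : ZMod (p ^ m)) ^ e • w)
        (Nat.zero_le m) ⟨v, by simp⟩
    have hle := Nat.findGreatest_le (P := fun e => ∃ w : Fin n → ZMod (p ^ m), v = (p : ZMod (p ^ m)) ^ e • w) m
    have hltm : Nat.findGreatest (fun e => ∃ w : Fin n → ZMod (p ^ m), v = (p : ZMod (p ^ m)) ^ e • w) m < m := by
      rcases eq_or_lt_of_le hle with heq | h
      · exfalso
        obtain ⟨w, hw⟩ := hspec
        rw [heq, hpowm, zero_smul] at hw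
        exact hv hw
      · exact h
    exact ⟨_, hltm, hspec,
      Nat.findGreatest_is_greatest
        (P := fun e => ∃ w : Fin n → ZMod (p ^ m), v = (p : ZMod (p ^ m)) ^ e • w) (n := m)
        (Nat.lt_succ_self _) (by omega)⟩
  -- the reduction of w is nonzero
  set wb : Fin n → ZMod p := fun i => f (w i) with hwb
  have hwb0 : wb ≠ 0 := by
    intro h0
    apply hnot
    have hy : ∀ i, ∃ y : ZMod (p ^ m), w i = (p : ZMod (p ^ m)) * y := by
      intro i
      apply aux_exists_mul hp hm
      have : wb i = 0 := by rw [h0]; rfl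
      exact this
    choose y hy using hy
    refine ⟨y, ?_⟩
    funext i
    rw [hw]
    simp only [Pi.smul_apply, smul_eq_mul]
    rw [hy i, pow_succ]
    ring
  -- the fixed-point equation descends
  have hfixF : (((Φ g) ^ k : GL (Fin n) (ZMod p)) : Matrix (Fin n) (Fin n) (ZMod p)).mulVec wb = wb := by
    have hM : (((Φ g) ^ k : GL (Fin n) (ZMod p)) : Matrix (Fin n) (Fin n) (ZMod p))
        = ((g ^ k : GL (Fin n) (ZMod (p ^ m))) : Matrix (Fin n) (Fin n) (ZMod (p ^ m))).map f := by
      rw [← map_zpow Φ g k]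
      exact hΦcoe _
    set M : Matrix (Fin n) (Fin n) (ZMod (p ^ m)) := ((g ^ k : GL (Fin n) (ZMod (p ^ m))) : Matrix (Fin n) (Fin n) (ZMod (p ^ m)))
    have hsm : (p : ZMod (p ^ m)) ^ e • (M.mulVec w - w) = 0 := by
      have : M.mulVec ((p : ZMod (p ^ m)) ^ e • w) = (p : ZMod (p ^ m)) ^ e • w := by
        rw [← hw]
        exact hfix
      rw [Matrix.mulVec_smul] at this
      rw [smul_sub, this, sub_self]
    have hcast : ∀ i, f (M.mulVec w i - w i) = 0 := by
      intro i
      apply aux_cast_zero hp hem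
      have := congrFun hsm i
      simpa [smul_eq_mul] using this
    funext i
    rw [hM]
    have h1 : (M.map f).mulVec wb i = f (M.mulVec w i) := by
      rw [show wb = f ∘ w from rfl]
      exact (RingHom.map_mulVec f M w i).symm
    have h2 := hcast i
    rw [map_sub, sub_eq_zero] at h2
    rw [h1, h2]
  have := aux_singer_field p n hp hn (Φ g) hordF k wb hwb0 hfixF
  exact this
end

section
/- Let p be a prime, n, m ≥ 1, and let g ∈ GL_n(ZMod p^m) have order p^n − 1. Let Ω = { v ∈ (ZMod p^m)^n : p • v = 0 } be the p-torsion subgroup of Q = (ZMod p^m)^n. Then the cyclic group generated by g acts transitively on the nonzero elements of Ω: for all nonzero v, w ∈ Ω there exists a natural number k with g^k • v = w. -/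
open Matrix
open scoped MatrixGroups

section SingerAux
open Polynomial


private lemma aux_pow_p (R : Type*) [Ring R] (p j : ℕ) (hj : 1 ≤ j) (B : R) :
    ∃ C : R, (1 + p ^ j • B) ^ p = 1 + p ^ (j + 1) • C := by
  have hdvd : ∀ i : ℕ, p ^ (j + 1) ∣ p ^ (j * (i + 1)) * Nat.choose p (i + 1) := by
    intro i
    rcases Nat.eq_zero_or_pos i with rfl | hi
    · simp [Nat.choose_one_right, pow_succ, mul_one]
    · exact Dvd.dvd.mul_right (pow_dvd_pow p (by nlinarith)) _
  refine ⟨∑ i ∈ Finset.range p, (p ^ (j * (i + 1)) * Nat.choose p (i + 1) / p ^ (j + 1)) • B ^ (i + 1), ?_⟩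
  have hc : Commute (p ^ j • B) (1 : R) := Commute.one_right _
  rw [add_comm (1 : R), hc.add_pow p, Finset.sum_range_succ']
  simp only [pow_zero, one_pow, one_mul, Nat.choose_zero_right, Nat.cast_one, mul_one]
  rw [add_comm]
  congr 1
  rw [Finset.smul_sum]
  refine Finset.sum_congr rfl fun i _ => ?_
  have h1 : (p ^ j • B) ^ (i + 1) = p ^ (j * (i + 1)) • B ^ (i + 1) := by
    rw [_root_.smul_pow, ← pow_mul]
  rw [h1]
  have h2 : (p ^ (j * (i + 1)) • B ^ (i + 1)) * (Nat.choose p (i + 1) : R)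
      = (p ^ (j * (i + 1)) * Nat.choose p (i + 1)) • B ^ (i + 1) := by
    rw [smul_mul_assoc, ← (Nat.cast_commute (Nat.choose p (i + 1)) (B ^ (i + 1))).eq, ← nsmul_eq_mul, smul_smul]
  rw [h2, smul_smul, Nat.mul_div_cancel' (hdvd i)]

private lemma aux_pow_pt (R : Type*) [Ring R] (p t : ℕ) (B : R) :
    ∃ C : R, (1 + p • B) ^ (p ^ t) = 1 + p ^ (t + 1) • C := by
  induction t with
  | zero => exact ⟨B, by simp⟩
  | succ t ih =>
    obtain ⟨C, hC⟩ := ih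
    obtain ⟨C', hC'⟩ := aux_pow_p R p (t + 1) (by omega) C
    exact ⟨C', by rw [pow_succ, pow_mul, hC, hC']⟩


private lemma aux_drop (p m : ℕ) (hm : 1 ≤ m) (u : ℕ) :
    ((p ^ (m - 1) * (u % p) : ℕ) : ZMod (p ^ m)) = ((p ^ (m - 1) * u : ℕ) : ZMod (p ^ m)) := by
  have key : p ^ (m - 1) * u = p ^ m * (u / p) + p ^ (m - 1) * (u % p) := by
    conv_lhs => rw [← Nat.div_add_mod u p]
    have h3 : m - 1 + 1 = m := by omega
    rw [Nat.mul_add, ← Nat.mul_assoc, ← pow_succ, h3]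
  have h0 : ((p ^ m * (u / p) : ℕ) : ZMod (p ^ m)) = 0 := by
    rw [Nat.cast_mul, ZMod.natCast_self, zero_mul]
  rw [key, Nat.cast_add, h0, zero_add]

private def psiHom (p m : ℕ) [NeZero p] (hm : 1 ≤ m) : ZMod p →+ ZMod (p ^ m) where
  toFun x := ((p ^ (m - 1) * x.val : ℕ) : ZMod (p ^ m))
  map_zero' := by simp
  map_add' x y := by
    show ((p ^ (m - 1) * (x + y).val : ℕ) : ZMod (p ^ m)) = _
    rw [ZMod.val_add, aux_drop p m hm, Nat.mul_add, Nat.cast_add]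

private lemma psiHom_apply (p m : ℕ) [NeZero p] (hm : 1 ≤ m) (x : ZMod p) :
    psiHom p m hm x = ((p ^ (m - 1) * x.val : ℕ) : ZMod (p ^ m)) := rfl

private lemma aux_pow_eq (p m : ℕ) (hm : 1 ≤ m) : p ^ (m - 1) * p = p ^ m := by
  rw [← pow_succ]; congr 1; omega

private lemma psiHom_inj (p m : ℕ) [NeZero p] [NeZero (p ^ m)] (hp : 0 < p) (hm : 1 ≤ m) :
    Function.Injective (psiHom p m hm) := by
  intro x y hxy
  have hb : ∀ z : ZMod p, p ^ (m - 1) * z.val < p ^ m := by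
    intro z
    have h1 : z.val < p := ZMod.val_lt z
    have h2 : 0 < p ^ (m - 1) := pow_pos hp _
    calc p ^ (m - 1) * z.val < p ^ (m - 1) * p := mul_lt_mul_of_pos_left h1 h2
      _ = p ^ m := aux_pow_eq p m hm
  rw [psiHom_apply, psiHom_apply] at hxy
  have := congrArg ZMod.val hxy
  rw [ZMod.val_cast_of_lt (hb x), ZMod.val_cast_of_lt (hb y)] at this
  have hval : x.val = y.val := Nat.eq_of_mul_eq_mul_left (pow_pos hp _) this
  exact ZMod.val_injective _ hval

private lemma psiHom_surj_torsion (p m : ℕ) [NeZero p] [NeZero (p ^ m)] (hp : 0 < p) (hm : 1 ≤ m)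
    (x : ZMod (p ^ m)) (hx : (p : ZMod (p ^ m)) * x = 0) : ∃ y, psiHom p m hm y = x := by
  have h1 : ((p * x.val : ℕ) : ZMod (p ^ m)) = 0 := by
    rw [Nat.cast_mul, ZMod.natCast_rightInverse x, hx]
  have h2 : p ^ m ∣ p * x.val := (ZMod.natCast_eq_zero_iff _ _).mp h1
  obtain ⟨k, hk⟩ := h2
  have hk' : x.val = p ^ (m - 1) * k := by
    have : p * x.val = p * (p ^ (m - 1) * k) := by
      rw [hk, ← aux_pow_eq p m hm]; ring
    exact Nat.eq_of_mul_eq_mul_left hp this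
  have hkp : k < p := by
    have h3 : x.val < p ^ m := ZMod.val_lt x
    rw [hk', ← aux_pow_eq p m hm] at h3
    exact Nat.lt_of_mul_lt_mul_left h3
  refine ⟨(k : ZMod p), ?_⟩
  rw [psiHom_apply, ZMod.val_cast_of_lt hkp, ← hk']
  exact ZMod.natCast_rightInverse x

private lemma psiHom_semilinear (p m : ℕ) [NeZero p] [NeZero (p ^ m)] (hm : 1 ≤ m)
    (hd : (p : ℕ) ∣ p ^ m) (b : ZMod (p ^ m)) (x : ZMod p) :
    psiHom p m hm (ZMod.castHom hd (ZMod p) b * x) = b * psiHom p m hm x := by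
  have hπ : (ZMod.castHom hd (ZMod p) b) = ((b.val : ℕ) : ZMod p) := by
    rw [ZMod.castHom_apply, ← ZMod.natCast_val]
  rw [psiHom_apply, psiHom_apply, ZMod.val_mul, aux_drop p m hm, hπ, ZMod.val_natCast]
  have key : ((p ^ (m - 1) * (b.val % p * x.val) : ℕ) : ZMod (p ^ m))
      = ((p ^ (m - 1) * (b.val % p) : ℕ) : ZMod (p ^ m)) * ((x.val : ℕ) : ZMod (p ^ m)) := by
    rw [← Nat.cast_mul]; ring_nf
  rw [key, aux_drop p m hm]
  have : ((p ^ (m - 1) * b.val : ℕ) : ZMod (p ^ m)) = (b.val : ZMod (p ^ m)) * ((p ^ (m - 1) : ℕ) : ZMod (p ^ m)) := by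
    push_cast; ring
  rw [this, ZMod.natCast_rightInverse b, mul_assoc, ← Nat.cast_mul]


private lemma singer_field (p n : ℕ) [Fact p.Prime] (hn : 1 ≤ n)
    (A : Matrix (Fin n) (Fin n) (ZMod p))
    (hA : A ^ (p ^ n - 1) = 1) (hAmin : ∀ d : ℕ, A ^ d = 1 → p ^ n - 1 ∣ d)
    (v w : Fin n → ZMod p) (hv : v ≠ 0) (hw : w ≠ 0) :
    ∃ k : ℕ, (A ^ k).mulVec v = w := by
  classical
  have hp : p.Prime := Fact.out
  set N := p ^ n - 1 with hNdef
  have hpn : 1 < p ^ n := Nat.one_lt_pow (by omega) hp.one_lt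
  have hN0 : N ≠ 0 := by omega
  have hN1 : N + 1 = p ^ n := by omega
  haveI : Nonempty (Fin n) := ⟨⟨0, hn⟩⟩
  -- the subalgebra K = F_p[A]
  set K := Algebra.adjoin (ZMod p) {A} with hKdef
  haveI : Finite K := Subtype.finite
  have hAmem : A ∈ K := Algebra.self_mem_adjoin_singleton _ _
  set AK : K := ⟨A, hAmem⟩ with hAKdef
  have hAKpow : ∀ k : ℕ, ((AK ^ k : K) : Matrix (Fin n) (Fin n) (ZMod p)) = A ^ k := by
    intro k; rw [SubmonoidClass.coe_pow]
  have hAK : AK ^ N = 1 := by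
    apply Subtype.ext
    rw [hAKpow, hA, OneMemClass.coe_one]
  -- the unit a given by A in K
  have hu : IsUnit AK := IsUnit.of_pow_eq_one hAK hN0
  obtain ⟨a, ha⟩ := hu
  have horder : orderOf a = N := by
    refine Nat.dvd_antisymm ?_ ?_
    · apply orderOf_dvd_of_pow_eq_one
      refine Units.ext ?_
      rw [Units.val_pow_eq_pow_val, ha, hAK, Units.val_one]
    · apply hAmin
      have h1 : (a ^ orderOf a : Kˣ) = 1 := pow_orderOf_eq_one a
      have h2 : ((a : K) ^ orderOf a : K) = 1 := by
        rw [← Units.val_pow_eq_pow_val, h1, Units.val_one]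
      rw [ha] at h2
      have := congrArg Subtype.val h2
      rw [hAKpow] at this
      exact this
  -- cardinality bound : |K| ≤ p ^ n
  have hcard_le : Nat.card K ≤ p ^ n := by
    have hsurj : Function.Surjective (fun f : Fin n → ZMod p =>
        (⟨aeval A (∑ i : Fin n, C (f i) * X ^ (i : ℕ)), by
          rw [hKdef, Algebra.adjoin_singleton_eq_range_aeval]; exact ⟨_, rfl⟩⟩ : K)) := by
      rintro ⟨x, hx⟩
      rw [hKdef, Algebra.adjoin_singleton_eq_range_aeval] at hx
      obtain ⟨q, hq⟩ := hx
      set r := q %ₘ A.charpoly with hrdef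
      have hmonic := A.charpoly_monic
      have haeval : aeval A r = x := by
        have hdiv := modByMonic_add_div q A.charpoly
        have : aeval A q = aeval A r + aeval A A.charpoly * aeval A (q /ₘ A.charpoly) := by
          rw [← _root_.map_mul, ← _root_.map_add, hdiv]
        rw [Matrix.aeval_self_charpoly, zero_mul, add_zero] at this
        rw [← this]; exact hq
      have hdeg : r.natDegree < n := by
        rcases eq_or_ne r 0 with h | h
        · rw [h, natDegree_zero]; omega
        · have h1 := degree_modByMonic_lt q hmonic
          rw [← hrdef] at h1
          have h2 : A.charpoly.degree = (n : ℕ) := by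
            have hd1 := A.charpoly_natDegree_eq_dim
            rw [Fintype.card_fin] at hd1
            have h2' : A.charpoly.degree = (A.charpoly.natDegree : ℕ) :=
              degree_eq_natDegree hmonic.ne_zero
            rw [hd1] at h2'
            exact h2'
          rw [h2] at h1
          exact (natDegree_lt_iff_degree_lt h).mpr h1
      refine ⟨fun i => r.coeff i, ?_⟩
      have hsum : (∑ i : Fin n, C (r.coeff i) * X ^ (i : ℕ)) = r := by
        conv_rhs => rw [r.as_sum_range' n hdeg]
        rw [← Fin.sum_univ_eq_sum_range (fun i => (monomial i) (r.coeff i)) n]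
        exact Finset.sum_congr rfl fun i _ => C_mul_X_pow_eq_monomial
      exact Subtype.ext (by simp only [hsum, haeval])
    calc Nat.card K ≤ Nat.card (Fin n → ZMod p) := Nat.card_le_card_of_surjective _ hsurj
      _ = p ^ n := by
          rw [Nat.card_eq_fintype_card, Fintype.card_fun, ZMod.card, Fintype.card_fin]
  -- K is nontrivial
  haveI : Nontrivial K := by
    refine ⟨⟨0, 1, fun h => ?_⟩⟩
    have := congrArg Subtype.val h
    exact zero_ne_one (α := Matrix (Fin n) (Fin n) (ZMod p)) this
  haveI : Finite Kˣ := inferInstance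
  -- counting units
  have hNle : N ≤ Nat.card Kˣ :=
    Nat.le_of_dvd Nat.card_pos (horder ▸ orderOf_dvd_natCard a)
  have hcard_ne : Nat.card {x : K // x ≠ 0} = Nat.card K - 1 := by
    letI := Fintype.ofFinite K
    rw [Nat.card_eq_fintype_card, Nat.card_eq_fintype_card]
    have h1 : Fintype.card {x : K // x = 0} = 1 := Fintype.card_subtype_eq (0 : K)
    have := Fintype.card_subtype_compl (fun x : K => x = 0)
    rw [h1] at this
    convert this using 2
  have hinj : Function.Injective (fun u : Kˣ => (⟨(u : K), u.ne_zero⟩ : {x : K // x ≠ 0})) := by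
    intro u₁ u₂ h
    exact Units.ext (congrArg Subtype.val h)
  have hUle : Nat.card Kˣ ≤ Nat.card K - 1 := by
    rw [← hcard_ne]
    exact Nat.card_le_card_of_injective _ hinj
  have hKcard : Nat.card K = p ^ n := le_antisymm hcard_le (by omega)
  have hUcard : Nat.card Kˣ = N := by omega
  -- every nonzero element of K is a unit
  have hunit : ∀ c : K, c ≠ 0 → ∃ u : Kˣ, (u : K) = c := by
    intro c hc
    have hbij : Function.Bijective (fun u : Kˣ => (⟨(u : K), u.ne_zero⟩ : {x : K // x ≠ 0})) := by
      rw [Nat.bijective_iff_injective_and_card]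
      exact ⟨hinj, by omega⟩
    obtain ⟨u, hu⟩ := hbij.2 ⟨c, hc⟩
    exact ⟨u, congrArg Subtype.val hu⟩
  -- the orbit map c ↦ c · v is injective hence surjective
  have hΦinj : Function.Injective (fun c : K => ((c : Matrix (Fin n) (Fin n) (ZMod p))).mulVec v) := by
    intro c₁ c₂ h
    replace h : ((c₁ : Matrix (Fin n) (Fin n) (ZMod p))).mulVec v
        = ((c₂ : Matrix (Fin n) (Fin n) (ZMod p))).mulVec v := h
    by_contra hne
    have hd : (c₁ - c₂ : K) ≠ 0 := sub_ne_zero.mpr hne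
    obtain ⟨u, hu⟩ := hunit _ hd
    have hz : ((c₁ - c₂ : K) : Matrix (Fin n) (Fin n) (ZMod p)).mulVec v = 0 := by
      have : ((c₁ - c₂ : K) : Matrix (Fin n) (Fin n) (ZMod p))
          = (c₁ : Matrix (Fin n) (Fin n) (ZMod p)) - (c₂ : Matrix (Fin n) (Fin n) (ZMod p)) := rfl
      rw [this, Matrix.sub_mulVec, h, sub_self]
    have hv0 : v = 0 := by
      have h1 : (((u⁻¹ : Kˣ) : K) : Matrix (Fin n) (Fin n) (ZMod p)).mulVec
          ((((u : Kˣ) : K) : Matrix (Fin n) (Fin n) (ZMod p)).mulVec v) = v := by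
        rw [Matrix.mulVec_mulVec]
        have : (((u⁻¹ : Kˣ) : K) : Matrix (Fin n) (Fin n) (ZMod p)) * (((u : Kˣ) : K) : Matrix (Fin n) (Fin n) (ZMod p))
            = (((u⁻¹ * u : Kˣ) : K) : Matrix (Fin n) (Fin n) (ZMod p)) := by
          rw [Units.val_mul]; rfl
        rw [this, inv_mul_cancel]
        show ((1 : K) : Matrix (Fin n) (Fin n) (ZMod p)).mulVec v = v
        rw [OneMemClass.coe_one, Matrix.one_mulVec]
      rw [hu, hz, Matrix.mulVec_zero] at h1
      exact h1.symm
    exact hv hv0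
  have hΦsurj : Function.Surjective (fun c : K => ((c : Matrix (Fin n) (Fin n) (ZMod p))).mulVec v) := by
    have : Function.Bijective (fun c : K => ((c : Matrix (Fin n) (Fin n) (ZMod p))).mulVec v) := by
      rw [Nat.bijective_iff_injective_and_card]
      refine ⟨hΦinj, ?_⟩
      rw [hKcard, Nat.card_eq_fintype_card, Fintype.card_fun, ZMod.card, Fintype.card_fin]
    exact this.2
  obtain ⟨c, hc⟩ := hΦsurj w
  replace hc : ((c : Matrix (Fin n) (Fin n) (ZMod p))).mulVec v = w := hc
  have hc0 : c ≠ 0 := by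
    rintro rfl
    apply hw
    rw [← hc]
    show ((0 : K) : Matrix (Fin n) (Fin n) (ZMod p)).mulVec v = 0
    rw [ZeroMemClass.coe_zero, Matrix.zero_mulVec]
  obtain ⟨u, hu⟩ := hunit c hc0
  -- u is a power of a
  have htop : Subgroup.zpowers a = ⊤ := by
    apply Subgroup.eq_top_of_card_eq
    rw [Nat.card_zpowers, horder, hUcard]
  have hmem : u ∈ Submonoid.powers a := by
    rw [mem_powers_iff_mem_zpowers, htop]
    trivial
  obtain ⟨k, hk⟩ := hmem
  replace hk : a ^ k = u := hk
  refine ⟨k, ?_⟩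
  have hAk : A ^ k = (c : Matrix (Fin n) (Fin n) (ZMod p)) := by
    have h1 : ((a ^ k : Kˣ) : K) = (u : K) := by rw [hk]
    rw [Units.val_pow_eq_pow_val, ha, hu] at h1
    have := congrArg Subtype.val h1
    rw [hAKpow] at this
    exact this
  rw [hAk]; exact hc

private lemma aux_ker (p m : ℕ) [NeZero p] [NeZero (p ^ m)] (hd : (p : ℕ) ∣ p ^ m)
    (x : ZMod (p ^ m)) (hx : ZMod.castHom hd (ZMod p) x = 0) : ∃ y : ZMod (p ^ m), x = p * y := by
  rw [ZMod.castHom_apply, ← ZMod.natCast_val] at hx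
  obtain ⟨t, ht⟩ := (ZMod.natCast_eq_zero_iff _ _).mp hx
  refine ⟨(t : ZMod (p ^ m)), ?_⟩
  rw [← (ZMod.natCast_rightInverse x : ((x.val : ℕ) : ZMod (p ^ m)) = x), ht]
  push_cast
  ring

end SingerAux

/-- A Singer cycle `g` in `GL n (ZMod (p ^ m))` generates a cyclic group acting
transitively on the nonzero elements of the `p`-torsion subgroup
`Ω = {v ∈ (ZMod (p ^ m)) ^ n : p • v = 0}`. -/
theorem singer_cycle_transitive_on_omega (p n m : ℕ) (hp : p.Prime) (hn : 1 ≤ n) (hm : 1 ≤ m)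
    (g : GL (Fin n) (ZMod (p ^ m))) (hg : orderOf g = p ^ n - 1)
    (v w : Fin n → ZMod (p ^ m))
    (hvΩ : p • v = 0) (hwΩ : p • w = 0) (hv : v ≠ 0) (hw : w ≠ 0) :
    ∃ k : ℕ, ((g ^ k : GL (Fin n) (ZMod (p ^ m))) :
        Matrix (Fin n) (Fin n) (ZMod (p ^ m))).mulVec v = w := by
  classical
  haveI : Fact p.Prime := ⟨hp⟩
  haveI : NeZero p := ⟨hp.pos.ne'⟩
  haveI : NeZero (p ^ m) := ⟨(pow_pos hp.pos m).ne'⟩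
  have hd : (p : ℕ) ∣ p ^ m := dvd_pow_self p (by omega)
  set π := ZMod.castHom hd (ZMod p) with hπdef
  set G : Matrix (Fin n) (Fin n) (ZMod (p ^ m)) := (g : Matrix (Fin n) (Fin n) (ZMod (p ^ m)))
    with hGdef
  set A : Matrix (Fin n) (Fin n) (ZMod p) := π.mapMatrix G with hAdef
  set N := p ^ n - 1 with hNdef
  have hpn1 : 1 ≤ p ^ n := Nat.one_le_pow _ _ hp.pos
  -- A ^ N = 1
  have hgN : G ^ N = 1 := by
    have h1 : (g ^ N : GL (Fin n) (ZMod (p ^ m))) = 1 := by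
      rw [← hg]; exact pow_orderOf_eq_one g
    calc G ^ N = ((g ^ N : GL (Fin n) (ZMod (p ^ m))) : Matrix (Fin n) (Fin n) (ZMod (p ^ m))) :=
          (Units.val_pow_eq_pow_val g N).symm
      _ = 1 := by rw [h1]; rfl
  have hA : A ^ N = 1 := by
    rw [hAdef, ← map_pow, hgN, _root_.map_one]
  -- minimality
  have hAmin : ∀ d : ℕ, A ^ d = 1 → N ∣ d := by
    intro d hAd
    have hmd : π.mapMatrix (G ^ d) = 1 := by rw [map_pow, ← hAdef, hAd]
    have hent : ∀ i j, ∃ y, (G ^ d) i j = (1 : Matrix (Fin n) (Fin n) (ZMod (p ^ m))) i j + p * y := by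
      intro i j
      have h2 : ((G ^ d).map π) i j = (1 : Matrix (Fin n) (Fin n) (ZMod p)) i j := by
        rw [← RingHom.mapMatrix_apply, hmd]
      rw [Matrix.map_apply] at h2
      have h1 : π ((G ^ d) i j - (1 : Matrix (Fin n) (Fin n) (ZMod (p ^ m))) i j) = 0 := by
        rw [map_sub, h2]
        rcases eq_or_ne i j with rfl | hij
        · simp [Matrix.one_apply_eq]
        · simp [Matrix.one_apply_ne hij]
      obtain ⟨y, hy⟩ := aux_ker p m hd _ h1
      exact ⟨y, by rw [add_comm]; exact sub_eq_iff_eq_add.mp hy⟩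
    choose B hB using hent
    have hMd : G ^ d = 1 + p • Matrix.of B := by
      ext i j
      rw [Matrix.add_apply, Matrix.smul_apply, nsmul_eq_mul]
      exact hB i j
    obtain ⟨C, hC⟩ := aux_pow_pt (Matrix (Fin n) (Fin n) (ZMod (p ^ m))) p (m - 1) (Matrix.of B)
    have hm1 : m - 1 + 1 = m := by omega
    rw [hm1] at hC
    have hzero : (p ^ m : ℕ) • C = 0 := by
      ext i j
      rw [Matrix.smul_apply, Matrix.zero_apply, nsmul_eq_mul,
        show ((p ^ m : ℕ) : ZMod (p ^ m)) = 0 from ZMod.natCast_self _, zero_mul]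
    have hpow : (G ^ d) ^ (p ^ (m - 1)) = 1 := by rw [hMd, hC, hzero, add_zero]
    have hup : (g ^ (d * p ^ (m - 1)) : GL (Fin n) (ZMod (p ^ m))) = 1 := by
      apply Units.ext
      rw [Units.val_pow_eq_pow_val, Units.val_one, pow_mul]
      exact hpow
    have hdvd1 : N ∣ d * p ^ (m - 1) := hg ▸ orderOf_dvd_of_pow_eq_one hup
    have hcop : Nat.Coprime N p := by
      have hnd : ¬ p ∣ N := by
        intro hdv
        have h1 : p ∣ p ^ n := dvd_pow_self p (by omega)
        have h2 := Nat.dvd_sub h1 hdv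
        rw [show p ^ n - N = 1 by omega] at h2
        have := Nat.le_of_dvd one_pos h2
        have := hp.two_le
        omega
      exact Nat.coprime_comm.mp (hp.coprime_iff_not_dvd.mpr hnd)
    exact Nat.Coprime.dvd_of_dvd_mul_right (hcop.pow_right _) hdvd1
  -- transfer v, w to ZMod p
  have htor : ∀ (x : Fin n → ZMod (p ^ m)), p • x = 0 → ∀ i, (p : ZMod (p ^ m)) * x i = 0 := by
    intro x hx i
    have := congrFun hx i
    rw [Pi.smul_apply, Pi.zero_apply] at this
    rw [← nsmul_eq_mul]
    exact this
  choose v' hv' using fun i => psiHom_surj_torsion p m hp.pos hm (v i) (htor v hvΩ i)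
  choose w' hw' using fun i => psiHom_surj_torsion p m hp.pos hm (w i) (htor w hwΩ i)
  have hv'0 : v' ≠ 0 := by
    intro h0
    apply hv
    funext i
    rw [← hv' i, congrFun h0 i]
    simp
  have hw'0 : w' ≠ 0 := by
    intro h0
    apply hw
    funext i
    rw [← hw' i, congrFun h0 i]
    simp
  obtain ⟨k, hk⟩ := singer_field p n hn A hA hAmin v' w' hv'0 hw'0
  refine ⟨k, funext fun j => ?_⟩
  have hgk : ((g ^ k : GL (Fin n) (ZMod (p ^ m))) : Matrix (Fin n) (Fin n) (ZMod (p ^ m)))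
      = G ^ k := Units.val_pow_eq_pow_val g k
  have hAk : ∀ i j, (A ^ k) i j = π ((G ^ k) i j) := by
    intro i j
    rw [hAdef, ← map_pow, RingHom.mapMatrix_apply, Matrix.map_apply]
  calc ((g ^ k : GL (Fin n) (ZMod (p ^ m))) : Matrix (Fin n) (Fin n) (ZMod (p ^ m))).mulVec v j
      = ∑ i, (G ^ k) j i * v i := by rw [hgk]; simp [Matrix.mulVec, dotProduct]
    _ = ∑ i, psiHom p m hm (π ((G ^ k) j i) * v' i) := by
        refine Finset.sum_congr rfl fun i _ => ?_
        rw [psiHom_semilinear p m hm hd, hv' i]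
    _ = psiHom p m hm (∑ i, π ((G ^ k) j i) * v' i) := (map_sum _ _ _).symm
    _ = psiHom p m hm ((A ^ k).mulVec v' j) := by
        congr 1
        simp only [Matrix.mulVec, dotProduct, hAk]
    _ = psiHom p m hm (w' j) := by rw [hk]
    _ = w j := hw' j
end
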